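/- arXiv:2305.18131 — 14 statements merged into one kernel-verified Lean document; each statement's English description precedes it below -/
import Mathlib

section
/- Let S be an extremally disconnected profinite set. Then the ring C(S, ℝ) of continuous real-valued functions on S is semi-hereditary; in fact every finitely generated ideal of C(S, ℝ) is principal and projective as a C(S, ℝ)-module. -/
open Set

/-- Division lemma: on an extremally disconnected compact Hausdorff space, if `|f| ≤ C·k`
with `k ≥ 0`, then `k` divides `f` in `C(S, ℝ)`. -/
theorem div_lemma {S : Type} [TopologicalSpace S] [ExtremallyDisconnected S]
    (f k : C(S, ℝ)) (hk : ∀ x, 0 ≤ k x) (C : ℝ)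
    (hfk : ∀ x, |f x| ≤ C * k x) : ∃ h : C(S, ℝ), ∀ x, f x = h x * k x := by
  set D : ℝ := |C| + 1 with hD
  have hD0 : 0 < D := by positivity
  set B : ℝ → Set S := fun t => closure {x | f x < t * k x} ∪ (closure {x | 0 < k x})ᶜ with hB
  have hUopen : IsOpen {x | 0 < k x} := isOpen_lt continuous_const k.continuous
  have hBopen : ∀ t, IsOpen (B t) := by
    intro t
    exact (ExtremallyDisconnected.open_closure _
        (isOpen_lt f.continuous (continuous_const.mul k.continuous))).union
      (isClosed_closure.isOpen_compl)
  have hBclosed : ∀ t, IsClosed (B t) := by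
    intro t
    exact isClosed_closure.union (ExtremallyDisconnected.open_closure _ hUopen).isClosed_compl
  have hBmono : ∀ {t t' : ℝ}, t ≤ t' → B t ⊆ B t' := by
    intro t t' htt
    apply union_subset_union_left
    apply closure_mono
    intro x hx
    exact lt_of_lt_of_le hx (mul_le_mul_of_nonneg_right htt (hk x))
  have hBD : ∀ x, x ∈ B D := by
    intro x
    by_cases hx : x ∈ closure {x | 0 < k x}
    · left
      refine closure_mono ?_ hx
      intro y hy
      have h1 : |f y| ≤ |C| * k y := le_trans (hfk y) (by
        exact mul_le_mul_of_nonneg_right (le_abs_self C) (hk y))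
      calc f y ≤ |f y| := le_abs_self _
        _ ≤ |C| * k y := h1
        _ < (|C| + 1) * k y := by
            have hy' : 0 < k y := hy
            nlinarith
    · right; exact hx
  set St : S → Set ℝ := fun x => {t | t ∈ Icc (-D) D ∧ x ∈ B t} with hSt
  have hne : ∀ x, (St x).Nonempty := fun x => ⟨D, ⟨by linarith, le_rfl⟩, hBD x⟩
  have hbdd : ∀ x, BddBelow (St x) := fun x => ⟨-D, fun t ht => ht.1.1⟩
  set h0 : S → ℝ := fun x => sInf (St x) with hh0
  have hle : ∀ x t, t ∈ St x → h0 x ≤ t := fun x t ht => csInf_le (hbdd x) ht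
  have hlow : ∀ x, -D ≤ h0 x := fun x => le_csInf (hne x) fun t ht => ht.1.1
  have hupp : ∀ x, h0 x ≤ D := fun x => hle x D ⟨⟨by linarith, le_rfl⟩, hBD x⟩
  have hltiff : ∀ x r, h0 x < r ↔ ∃ t ∈ St x, t < r := fun x r => csInf_lt_iff (hbdd x) (hne x)
  -- openness of sublevel sets
  have hop1 : ∀ r : ℝ, IsOpen {x | h0 x < r} := by
    intro r
    have : {x | h0 x < r} = ⋃ t ∈ Icc (-D) D ∩ Iio r, B t := by
      ext x
      simp only [mem_setOf_eq, mem_iUnion, exists_prop, mem_inter_iff, mem_Iio]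
      constructor
      · rintro hx
        obtain ⟨t, ht, htr⟩ := (hltiff x r).1 hx
        exact ⟨t, ⟨ht.1, htr⟩, ht.2⟩
      · rintro ⟨t, ⟨ht1, ht2⟩, hxB⟩
        exact lt_of_le_of_lt (hle x t ⟨ht1, hxB⟩) ht2
    rw [this]
    exact isOpen_biUnion fun t _ => hBopen t
  have hop2 : ∀ r : ℝ, IsOpen {x | r < h0 x} := by
    intro r
    rcases lt_or_ge r (-D) with hr | hr
    · have : {x | r < h0 x} = univ := eq_univ_of_forall fun x => lt_of_lt_of_le hr (hlow x)
      rw [this]; exact isOpen_univ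
    rcases le_or_gt D r with hrD | hrD
    · have : {x | r < h0 x} = ∅ := eq_empty_iff_forall_notMem.2 fun x hx =>
        (not_lt.2 ((hupp x).trans hrD)) hx
      rw [this]; exact isOpen_empty
    · have hcl : {x | h0 x ≤ r} = ⋂ t ∈ Icc (-D) D ∩ Ioi r, B t := by
        ext x
        simp only [mem_setOf_eq, mem_iInter, mem_inter_iff, mem_Ioi]
        constructor
        · rintro hx t ⟨ht1, ht2⟩
          obtain ⟨s, hs, hst⟩ := (hltiff x t).1 (lt_of_le_of_lt hx ht2)
          exact hBmono hst.le hs.2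
        · intro hall
          by_contra hcon
          push_neg at hcon
          set ε := (h0 x - r) / 2 with hε
          have hε0 : 0 < ε := by simp [hε]; linarith
          set t := min D (r + ε) with htdef
          have ht1 : t ∈ Icc (-D) D := ⟨le_min (by linarith) (by linarith), min_le_left _ _⟩
          have ht2 : r < t := lt_min hrD (by linarith)
          have := hle x t ⟨ht1, hall t ⟨ht1, ht2⟩⟩
          have htle : t ≤ r + ε := min_le_right _ _
          linarith
      have : {x | r < h0 x} = ({x | h0 x ≤ r})ᶜ := by
        ext x; simp [not_le]
      rw [this, hcl]
      exact (isClosed_biInter fun t _ => hBclosed t).isOpen_compl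
  have hcont : Continuous h0 := by
    rw [continuous_iff_continuousAt]
    intro x
    rw [ContinuousAt, tendsto_order]
    constructor
    · intro a ha
      exact ((hop2 a).eventually_mem ha).mono fun y hy => hy
    · intro a ha
      exact ((hop1 a).eventually_mem ha).mono fun y hy => hy
  refine ⟨⟨h0, hcont⟩, ?_⟩
  intro x
  rcases eq_or_lt_of_le (hk x) with hkx | hkx
  · have hfx : f x = 0 := by
      have h1 := hfk x
      rw [← hkx, mul_zero] at h1
      exact abs_eq_zero.1 (le_antisymm h1 (abs_nonneg _))
    simp [hfx, ← hkx]
  · -- k x > 0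
    set v := f x / k x with hv
    have hvk : f x = v * k x := by rw [hv, div_mul_cancel₀ _ (ne_of_gt hkx)]
    have hvC : |v| ≤ |C| := by
      rw [abs_div, div_le_iff₀ (abs_pos.2 (ne_of_gt hkx))]
      calc |f x| ≤ C * k x := hfk x
        _ ≤ |C| * k x := mul_le_mul_of_nonneg_right (le_abs_self C) (hk x)
        _ = |C| * |k x| := by rw [abs_of_pos hkx]
    have hxU : x ∈ closure {y | 0 < k y} := subset_closure hkx
    have hge : v ≤ h0 x := by
      apply le_csInf (hne x)
      intro t ht
      by_contra hcon
      push_neg at hcon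
      have hxB := ht.2
      have hxA : x ∈ closure {y | f y < t * k y} := by
        rcases hxB with h | h
        · exact h
        · exact absurd hxU h
      set m := (t + v) / 2 with hm
      have htm : t < m := by simp [hm]; linarith
      have hmv : m < v := by simp [hm]; linarith
      have hP : x ∈ {y | m * k y < f y} := by
        simp only [mem_setOf_eq]
        calc m * k x < v * k x := by nlinarith
          _ = f x := hvk.symm
      have hPopen : IsOpen {y | m * k y < f y} :=
        isOpen_lt (continuous_const.mul k.continuous) f.continuous
      obtain ⟨y, hy1, hy2⟩ := mem_closure_iff.1 hxA _ hPopen hP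
      simp only [mem_setOf_eq] at hy1 hy2
      nlinarith [hk y]
    have hle2 : h0 x ≤ v := by
      by_contra hcon
      push_neg at hcon
      set ε := (h0 x - v) / 2 with hε
      have hε0 : 0 < ε := by simp [hε]; linarith
      set t := min D (v + ε) with htdef
      have hvD : v < D := lt_of_le_of_lt (le_trans (le_abs_self v) hvC) (by simp [hD])
      have ht1 : t ∈ Icc (-D) D := ⟨le_min (by linarith)
        (by have := neg_abs_le v; linarith [le_trans (neg_le_neg hvC) (neg_abs_le v)]), min_le_left _ _⟩
      have hvt : v < t := lt_min hvD (by linarith)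
      have hxO : x ∈ {y | f y < t * k y} := by
        simp only [mem_setOf_eq, hvk]
        nlinarith
      have := hle x t ⟨ht1, Or.inl (subset_closure hxO)⟩
      have : h0 x ≤ v + ε := le_trans this (min_le_right _ _)
      linarith
    have hxv : h0 x = v := le_antisymm hle2 hge
    show f x = h0 x * k x
    rw [hxv, ← hvk]

theorem abs_factor {S : Type} [TopologicalSpace S] [ExtremallyDisconnected S] (f : C(S, ℝ)) :
    ∃ h : C(S, ℝ), (∀ x, f x = h x * |f x|) ∧ (∀ x, |f x| = h x * f x) := by
  set k : C(S, ℝ) := ⟨fun x => |f x|, f.continuous.abs⟩ with hkdef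
  obtain ⟨h, hh⟩ := div_lemma f k (fun x => abs_nonneg _) 1 (fun x => by
    show |f x| ≤ 1 * |f x|; rw [one_mul])
  refine ⟨h, fun x => hh x, fun x => ?_⟩
  rcases eq_or_ne (f x) 0 with hf | hf
  · simp [hf]
  · have h1 : f x = h x * |f x| := hh x
    have h2 : |f x| ≠ 0 := abs_ne_zero.2 hf
    have h3 : |f x| * |f x| = (h x * f x) * |f x| := by
      rw [abs_mul_abs_self]
      calc f x * f x = (h x * |f x|) * f x := by rw [← h1]
        _ = h x * f x * |f x| := by ring
    exact (mul_right_cancel₀ h2 h3)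

theorem pair_span {S : Type} [TopologicalSpace S] [ExtremallyDisconnected S] (f g : C(S, ℝ)) :
    ∃ k : C(S, ℝ), (∀ x, 0 ≤ k x) ∧
      Ideal.span ({f, g} : Set C(S, ℝ)) = Ideal.span {k} := by
  set k : C(S, ℝ) := ⟨fun x => |f x| + |g x|, (f.continuous.abs.add g.continuous.abs)⟩ with hkdef
  have hknn : ∀ x, 0 ≤ k x := fun x => add_nonneg (abs_nonneg _) (abs_nonneg _)
  refine ⟨k, hknn, ?_⟩
  apply le_antisymm
  · rw [Ideal.span_le]
    rintro a ha
    rcases ha with rfl | ha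
    · obtain ⟨h, hh⟩ := div_lemma a k hknn 1 (fun x => by
        show |a x| ≤ 1 * (|a x| + |g x|)
        rw [one_mul]; linarith [abs_nonneg (g x)])
      exact Ideal.mem_span_singleton'.2 ⟨h, by ext x; exact (hh x).symm⟩
    · rcases ha with rfl
      obtain ⟨h, hh⟩ := div_lemma a k hknn 1 (fun x => by
        show |a x| ≤ 1 * (|f x| + |a x|)
        rw [one_mul]; linarith [abs_nonneg (f x)])
      exact Ideal.mem_span_singleton'.2 ⟨h, by ext x; exact (hh x).symm⟩
  · rw [Ideal.span_le]
    rintro a ha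
    rcases ha with rfl
    obtain ⟨hf, hf1, hf2⟩ := abs_factor f
    obtain ⟨hg, hg1, hg2⟩ := abs_factor g
    refine SetLike.mem_coe.2 (Ideal.mem_span_pair.2 ⟨hf, hg, ?_⟩)
    ext x
    show hf x * f x + hg x * g x = |f x| + |g x|
    rw [← hf2 x, ← hg2 x]

theorem fg_has_nonneg_gen {S : Type} [TopologicalSpace S] [ExtremallyDisconnected S]
    (I : Ideal C(S, ℝ)) (hI : I.FG) :
    ∃ g : C(S, ℝ), (∀ x, 0 ≤ g x) ∧ I = Ideal.span {g} := by
  obtain ⟨s, hs⟩ := hI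
  classical
  induction s using Finset.induction generalizing I with
  | empty =>
    refine ⟨0, fun x => le_rfl, ?_⟩
    rw [← hs, Finset.coe_empty, Ideal.span_empty]
    exact (Ideal.span_singleton_eq_bot.mpr rfl).symm
  | @insert a s _ ih =>
    obtain ⟨g, hg0, hg⟩ := ih (Ideal.span (s : Set C(S, ℝ))) rfl
    obtain ⟨k, hk0, hk⟩ := pair_span a g
    refine ⟨k, hk0, ?_⟩
    rw [← hs, Finset.coe_insert, Ideal.span_insert, hg, ← Ideal.span_insert]
    exact hk

theorem span_singleton_projective {S : Type} [TopologicalSpace S] [T2Space S]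
    [ExtremallyDisconnected S] (g : C(S, ℝ)) :
    Module.Projective C(S, ℝ) (Ideal.span ({g} : Set C(S, ℝ))) := by
  classical
  set U : Set S := {x | g x ≠ 0} with hUdef
  have hUopen : IsOpen U := isOpen_ne_fun g.continuous continuous_const
  set W : Set S := closure U with hWdef
  have hWclopen : IsClopen W := ⟨isClosed_closure, ExtremallyDisconnected.open_closure _ hUopen⟩
  set e : C(S, ℝ) := ⟨W.piecewise (fun _ => (1 : ℝ)) (fun _ => (0 : ℝ)), Continuous.piecewise
    (by simp [hWclopen.frontier_eq]) continuous_const continuous_const⟩ with hedef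
  have he1 : ∀ x ∈ W, e x = 1 := fun x hx =>
    Set.piecewise_eq_of_mem W (fun _ => (1 : ℝ)) (fun _ => (0 : ℝ)) hx
  have he0 : ∀ x ∉ W, e x = 0 := fun x hx =>
    Set.piecewise_eq_of_notMem W (fun _ => (1 : ℝ)) (fun _ => (0 : ℝ)) hx
  have heg : e * g = g := by
    ext x
    by_cases hx : x ∈ W
    · show e x * g x = g x
      rw [he1 x hx, one_mul]
    · have hgx : g x = 0 := by
        by_contra hgx
        exact hx (subset_closure hgx)
      show e x * g x = g x
      rw [hgx, mul_zero]
  have eqker : ∀ a b : C(S, ℝ), a * g = b * g → e * a = e * b := by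
    intro a b hab
    have heq : Set.EqOn (⇑a) (⇑b) U := by
      intro y hy
      have h1 : a y * g y = b y * g y := by
        have h2 := ContinuousMap.congr_fun hab y
        rwa [ContinuousMap.mul_apply, ContinuousMap.mul_apply] at h2
      exact mul_right_cancel₀ hy h1
    have heqW : Set.EqOn (⇑a) (⇑b) W := heq.closure a.continuous b.continuous
    ext x
    by_cases hx : x ∈ W
    · show e x * a x = e x * b x
      rw [heqW hx]
    · show e x * a x = e x * b x
      rw [he0 x hx, zero_mul, zero_mul]
  set I := Ideal.span ({g} : Set C(S, ℝ)) with hIdef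
  have hgI : g ∈ I := Ideal.subset_span rfl
  set c : I → C(S, ℝ) := fun x => Classical.choose (Ideal.mem_span_singleton'.1 x.2) with hcdef
  have hc : ∀ x : I, c x * g = (x : C(S, ℝ)) := fun x =>
    Classical.choose_spec (Ideal.mem_span_singleton'.1 x.2)
  have wd : ∀ (x : I) (a : C(S, ℝ)), a * g = (x : C(S, ℝ)) → e * c x = e * a := by
    intro x a h
    exact eqker _ _ (by rw [hc, h])
  set σ : I →ₗ[C(S, ℝ)] C(S, ℝ) :=
    { toFun := fun x => e * c x
      map_add' := by
        intro x y
        show e * c (x + y) = e * c x + e * c y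
        rw [wd (x + y) (c x + c y) (by rw [add_mul, hc, hc]; rfl), mul_add]
      map_smul' := by
        intro r x
        show e * c (r • x) = r • (e * c x)
        rw [wd (r • x) (r * c x) (by rw [mul_assoc, hc]; rfl)]
        show e * (r * c x) = r * (e * c x)
        ring } with hσdef
  set φ : C(S, ℝ) →ₗ[C(S, ℝ)] I := LinearMap.toSpanSingleton C(S, ℝ) I ⟨g, hgI⟩ with hφdef
  apply Module.Projective.of_split σ φ
  refine LinearMap.ext fun x => ?_
  show φ (σ x) = x
  apply Subtype.ext
  show (e * c x) * g = (x : C(S, ℝ))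
  calc (e * c x) * g = (c x) * (e * g) := by ring
    _ = c x * g := by rw [heg]
    _ = (x : C(S, ℝ)) := hc x

/-- For an extremally disconnected profinite set `S`, the ring `C(S, ℝ)` of
continuous real-valued functions is semi-hereditary; in fact every finitely generated ideal is
principal and projective. -/
theorem stmt_0 (S : Type) [TopologicalSpace S] [CompactSpace S] [T2Space S]
    [TotallyDisconnectedSpace S] [ExtremallyDisconnected S]
    (I : Ideal C(S, ℝ)) (hI : I.FG) :
    Submodule.IsPrincipal I ∧ Module.Projective C(S, ℝ) I := by
  obtain ⟨g, -, rfl⟩ := fg_has_nonneg_gen I hI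
  exact ⟨⟨g, rfl⟩, span_singleton_projective g⟩
end

section
/- Let p be a prime and let S be an extremally disconnected profinite set. Then the ring C(S, ℤ_p) of continuous ℤ_p-valued functions on S is semi-hereditary; in fact every finitely generated ideal of C(S, ℤ_p) is principal and projective as a C(S, ℤ_p)-module. -/
open Set

variable {p : ℕ} [Fact p.Prime]

lemma padic_norm_eq_of_sub_lt {a b : ℤ_[p]} (h : ‖a - b‖ < ‖b‖) : ‖a‖ = ‖b‖ := by
  have h1 : ‖a‖ ≤ ‖b‖ := by
    have := PadicInt.nonarchimedean (b) (a - b)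
    simp only [add_sub_cancel] at this
    exact this.trans (max_le le_rfl h.le)
  rcases h1.lt_or_eq with h2 | h2
  · exfalso
    have h3 := PadicInt.nonarchimedean (a) (b - a)
    simp only [add_sub_cancel] at h3
    have hba : ‖b - a‖ < ‖b‖ := by rwa [norm_sub_rev]
    exact absurd (h3.trans_lt (max_lt h2 hba)) (lt_irrefl _)
  · exact h2

lemma padic_exists_mul {a b : ℤ_[p]} (ha : a ≠ 0) (h : ‖b‖ ≤ ‖a‖) : ∃ q : ℤ_[p], b = q * a := by
  have haQ : (a : ℚ_[p]) ≠ 0 := fun h0 => ha (Subtype.ext h0)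
  have hq : ‖(b : ℚ_[p]) / (a : ℚ_[p])‖ ≤ 1 := by
    rw [norm_div, div_le_one (norm_pos_iff.mpr haQ)]
    simpa [PadicInt.padic_norm_e_of_padicInt] using h
  refine ⟨⟨(b : ℚ_[p]) / (a : ℚ_[p]), hq⟩, ?_⟩
  apply Subtype.ext
  change (b:ℚ_[p]) = (b:ℚ_[p]) / a * a
  field_simp

variable {S : Type} [TopologicalSpace S]


open Classical in
noncomputable def indicCM (V : Set S) (hV : IsClopen V) : C(S, ℤ_[p]) :=
  ⟨fun x => if x ∈ V then 1 else 0, by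
    apply Continuous.if ?_ continuous_const continuous_const
    intro a ha
    rw [show {a | a ∈ V} = V from rfl, hV.frontier_eq] at ha
    exact absurd ha (notMem_empty a)⟩

def Vset (f g : C(S, ℤ_[p])) (n r : ℕ) : Set S :=
  {x | f x ≠ 0 ∧ ‖g x - (r : ℤ_[p]) * f x‖ ≤ (p : ℝ) ^ (-(n:ℤ)) * ‖f x‖}

lemma isOpen_Vset (f g : C(S, ℤ_[p])) (n r : ℕ) : IsOpen (Vset f g n r) := by
  rw [isOpen_iff_forall_mem_open]
  rintro x₀ ⟨hx0, hxle⟩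
  have ht : (0:ℝ) < ‖f x₀‖ := norm_pos_iff.mpr hx0
  have hp0 : (0:ℝ) < (p:ℝ) := by exact_mod_cast (Fact.out : p.Prime).pos
  have hpn : (0:ℝ) < (p:ℝ) ^ (-(n:ℤ)) := zpow_pos hp0 _
  refine ⟨{x | ‖f x - f x₀‖ < ‖f x₀‖} ∩
      {x | ‖(g x - (r:ℤ_[p]) * f x) - (g x₀ - (r:ℤ_[p]) * f x₀)‖ < (p:ℝ) ^ (-(n:ℤ)) * ‖f x₀‖},
      ?_, ?_, ?_⟩
  · rintro x ⟨h1, h2⟩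
    have hfx : ‖f x‖ = ‖f x₀‖ := padic_norm_eq_of_sub_lt h1
    refine ⟨by rw [← hfx] at ht; exact norm_pos_iff.mp ht, ?_⟩
    have := PadicInt.nonarchimedean ((g x - (r:ℤ_[p]) * f x) - (g x₀ - (r:ℤ_[p]) * f x₀))
      (g x₀ - (r:ℤ_[p]) * f x₀)
    simp only [sub_add_cancel] at this
    rw [hfx]
    exact this.trans (max_le h2.le hxle)
  · apply IsOpen.inter
    · exact isOpen_lt (by fun_prop) continuous_const
    · exact isOpen_lt (by fun_prop) continuous_const
  · exact ⟨by simpa using ht, by simpa using mul_pos hpn ht⟩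

lemma Vset_disjoint (f g : C(S, ℤ_[p])) {n r r' : ℕ} (hr : r < p^n) (hr' : r' < p^n)
    (hne : r ≠ r') : Disjoint (Vset f g n r) (Vset f g n r') := by
  rw [Set.disjoint_left]
  rintro x ⟨hx0, h1⟩ ⟨_, h2⟩
  have hfx : (0:ℝ) < ‖f x‖ := norm_pos_iff.mpr hx0
  have h3 : ‖((r':ℤ_[p]) - r) * f x‖ ≤ (p:ℝ)^(-(n:ℤ)) * ‖f x‖ := by
    have heq : ((r':ℤ_[p]) - r) * f x
        = (g x - (r:ℤ_[p]) * f x) + (-(g x - (r':ℤ_[p]) * f x)) := by ring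
    rw [heq]
    have h4 := PadicInt.nonarchimedean (g x - (r:ℤ_[p]) * f x) (-(g x - (r':ℤ_[p]) * f x))
    rw [norm_neg] at h4
    exact h4.trans (max_le h1 h2)
  have h5 : ‖((r':ℤ_[p]) - r)‖ ≤ (p:ℝ)^(-(n:ℤ)) := by
    rw [norm_mul] at h3
    exact le_of_mul_le_mul_right h3 hfx
  have h6 : ((p:ℤ)^n : ℤ) ∣ ((r' : ℤ) - r) := by
    rw [← PadicInt.norm_int_le_pow_iff_dvd]
    push_cast
    exact h5
  have h7 : (r':ℤ) - r = 0 := by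
    apply Int.eq_zero_of_abs_lt_dvd h6
    have habs : |((r':ℤ)) - r| < ((p^n : ℕ) : ℤ) := by
      rw [abs_sub_lt_iff]
      omega
    rwa [Nat.cast_pow] at habs
  exact hne (by omega)

lemma Vset_cover (f g : C(S, ℤ_[p])) (hle : ∀ x, ‖g x‖ ≤ ‖f x‖) {x : S} (hx : f x ≠ 0)
    (n : ℕ) : ∃ r < p^n, x ∈ Vset f g n r ∧
      ∀ q : ℤ_[p], g x = q * f x → ‖q - r‖ ≤ (p:ℝ)^(-(n:ℤ)) := by
  obtain ⟨q, hq⟩ := padic_exists_mul hx (hle x)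
  refine ⟨q.appr n, q.appr_lt n, ⟨hx, ?_⟩, ?_⟩
  · have h1 : ‖q - (q.appr n : ℤ_[p])‖ ≤ (p:ℝ)^(-(n:ℤ)) := by
      rw [show ((n:ℤ)) = ((n:ℕ):ℤ) from rfl, PadicInt.norm_le_pow_iff_mem_span_pow]
      exact PadicInt.appr_spec n q
    have heq : g x - (q.appr n : ℤ_[p]) * f x = (q - (q.appr n : ℤ_[p])) * f x := by
      rw [hq]; ring
    rw [heq, norm_mul]
    exact mul_le_mul_of_nonneg_right h1 (norm_nonneg _)
  · intro q' hq'
    have : q' = q := by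
      have hcan := hq'.symm.trans hq
      exact mul_right_cancel₀ hx hcan
    rw [this, show ((n:ℤ)) = ((n:ℕ):ℤ) from rfl, PadicInt.norm_le_pow_iff_mem_span_pow]
    exact PadicInt.appr_spec n q

lemma Vset_mono (f g : C(S, ℤ_[p])) (n r' : ℕ) :
    Vset f g (n+1) r' ⊆ Vset f g n (r' % p^n) := by
  rintro x ⟨hx0, h1⟩
  refine ⟨hx0, ?_⟩
  have hp0 : (0:ℝ) < (p:ℝ) := by exact_mod_cast (Fact.out : p.Prime).pos
  have hd : ((p:ℤ)^n) ∣ ((r' : ℤ) - ((r' % p^n : ℕ) : ℤ)) := by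
    apply Int.dvd_self_sub_of_emod_eq
    push_cast
    rfl
  set m : ℕ := r' % p^n with hm
  have h2 : ‖((r':ℤ_[p]) - ((m : ℕ) : ℤ_[p]))‖ ≤ (p:ℝ)^(-(n:ℤ)) := by
    have hcast : ((r':ℤ_[p]) - ((m : ℕ):ℤ_[p]))
        = ((((r':ℤ) - ((m : ℕ):ℤ)) : ℤ) : ℤ_[p]) := by push_cast; ring
    rw [hcast, PadicInt.norm_int_le_pow_iff_dvd]
    exact hd
  have heq : g x - ((m : ℕ) : ℤ_[p]) * f x
      = (g x - (r':ℤ_[p]) * f x) + (((r':ℤ_[p]) - (m : ℕ)) * f x) := by ring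
  rw [heq]
  have h4 := PadicInt.nonarchimedean (g x - (r':ℤ_[p]) * f x)
    ((((r':ℤ_[p]) - (m : ℕ))) * f x)
  apply h4.trans
  apply max_le
  · apply h1.trans
    apply mul_le_mul_of_nonneg_right _ (norm_nonneg _)
    apply zpow_le_zpow_right₀
    · exact_mod_cast (Fact.out : p.Prime).one_lt.le
    · omega
  · rw [norm_mul]
    exact mul_le_mul_of_nonneg_right h2 (norm_nonneg _)

lemma padic_mod_norm_le (n r' : ℕ) :
    ‖((r':ℤ_[p]) - ((r' % p^n : ℕ) : ℤ_[p]))‖ ≤ (p:ℝ)^(-(n:ℤ)) := by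
  have hd : ((p:ℤ)^n) ∣ ((r' : ℤ) - ((r' % p^n : ℕ) : ℤ)) := by
    apply Int.dvd_self_sub_of_emod_eq
    push_cast
    rfl
  set m : ℕ := r' % p^n with hm
  have hcast : ((r':ℤ_[p]) - ((m : ℕ):ℤ_[p]))
      = ((((r':ℤ) - ((m : ℕ):ℤ)) : ℤ) : ℤ_[p]) := by push_cast; ring
  rw [hcast, PadicInt.norm_int_le_pow_iff_dvd]
  exact hd

variable [CompactSpace S] [T2Space S] [ExtremallyDisconnected S]

noncomputable def cNfun (f g : C(S, ℤ_[p])) (n : ℕ) : C(S, ℤ_[p]) :=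
  ∑ r ∈ Finset.range (p^n), ((r : ℤ_[p])) • indicCM (closure (Vset f g n r))
    ⟨isClosed_closure, ExtremallyDisconnected.open_closure _ (isOpen_Vset f g n r)⟩

lemma cNfun_eval_of_mem (f g : C(S, ℤ_[p])) {n r : ℕ} (hr : r < p^n) {x : S}
    (hx : x ∈ closure (Vset f g n r)) : cNfun f g n x = r := by
  classical
  unfold cNfun
  rw [ContinuousMap.coe_sum, Finset.sum_apply, Finset.sum_eq_single r]
  · simp [indicCM, hx]
  · intro r' hr' hne
    have hnot : x ∉ closure (Vset f g n r') := by
      intro hx'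
      exact Set.disjoint_left.mp
        (ExtremallyDisconnected.disjoint_closure_of_disjoint_isOpen
          (Vset_disjoint f g hr (Finset.mem_range.mp hr') (fun h => hne h.symm))
          (isOpen_Vset f g n r) (isOpen_Vset f g n r')) hx hx'
    simp [indicCM, hnot]
  · intro h
    exact absurd (Finset.mem_range.mpr hr) h

lemma cNfun_eval_of_not_mem (f g : C(S, ℤ_[p])) {n : ℕ} {x : S}
    (hx : ∀ r < p^n, x ∉ closure (Vset f g n r)) : cNfun f g n x = 0 := by
  classical
  unfold cNfun
  rw [ContinuousMap.coe_sum, Finset.sum_apply]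
  apply Finset.sum_eq_zero
  intro r hr
  simp [indicCM, hx r (Finset.mem_range.mp hr)]

lemma div_lemma_s1 (f g : C(S, ℤ_[p])) (hle : ∀ x, ‖g x‖ ≤ ‖f x‖) :
    ∃ c : C(S, ℤ_[p]), g = c * f := by
  have hp1 : 1 < (p:ℝ) := by exact_mod_cast (Fact.out : p.Prime).one_lt
  have hppos : 0 < p := (Fact.out : p.Prime).pos
  have hpow : ∀ k : ℕ, (p:ℝ)^(-(k:ℤ)) = ((p:ℝ)⁻¹)^k := fun k => by
    rw [zpow_neg, zpow_natCast, inv_pow]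
  have step : ∀ n (x : S), ‖cNfun f g (n+1) x - cNfun f g n x‖ ≤ (p:ℝ)^(-(n:ℤ)) := by
    intro n x
    by_cases hx : ∃ r' < p^(n+1), x ∈ closure (Vset f g (n+1) r')
    · obtain ⟨r', hr', hmem⟩ := hx
      have h1 : cNfun f g (n+1) x = r' := cNfun_eval_of_mem f g hr' hmem
      have hmem2 : x ∈ closure (Vset f g n (r' % p^n)) :=
        closure_mono (Vset_mono f g n r') hmem
      have hrlt : r' % p^n < p^n := Nat.mod_lt _ (pow_pos hppos n)
      have h2 : cNfun f g n x = ((r' % p^n : ℕ) : ℤ_[p]) := cNfun_eval_of_mem f g hrlt hmem2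
      rw [h1, h2]
      exact padic_mod_norm_le n r'
    · push_neg at hx
      have hnone : ∀ r < p^n, x ∉ closure (Vset f g n r) := by
        intro r hr hmem
        have hsub : Vset f g n r ⊆
            ⋃ r' ∈ Finset.range (p^(n+1)), closure (Vset f g (n+1) r') := by
          intro y hy
          obtain ⟨r', hr'lt, hy', _⟩ := Vset_cover f g hle hy.1 (n+1)
          exact Set.mem_biUnion (Finset.mem_range.mpr hr'lt) (subset_closure hy')
        have hcl : IsClosed (⋃ r' ∈ Finset.range (p^(n+1)), closure (Vset f g (n+1) r')) :=
          Set.Finite.isClosed_biUnion (Finset.finite_toSet _) (fun _ _ => isClosed_closure)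
        have hmem' := closure_minimal hsub hcl hmem
        obtain ⟨r', hr', hmem''⟩ := Set.mem_iUnion₂.mp hmem'
        exact hx r' (Finset.mem_range.mp hr') hmem''
      rw [cNfun_eval_of_not_mem f g hx, cNfun_eval_of_not_mem f g hnone]
      simp [zpow_nonneg (by linarith : (0:ℝ) ≤ (p:ℝ))]
  have hdist : ∀ n, dist (cNfun f g n) (cNfun f g (n+1)) ≤ 1 * ((p:ℝ)⁻¹)^n := by
    intro n
    rw [one_mul, ContinuousMap.dist_le (by positivity)]
    intro x
    rw [dist_eq_norm, norm_sub_rev, ← hpow n]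
    exact step n x
  have hcauchy : CauchySeq (fun n => cNfun f g n) :=
    cauchySeq_of_le_geometric _ 1 (inv_lt_one_of_one_lt₀ hp1) hdist
  obtain ⟨c, hc⟩ := cauchySeq_tendsto_of_complete hcauchy
  refine ⟨c, ?_⟩
  ext x
  have hxlim : Filter.Tendsto (fun n => cNfun f g n x) Filter.atTop (nhds (c x)) :=
    ((continuous_eval_const x).tendsto c).comp hc
  by_cases hfx : f x = 0
  · have hgx : g x = 0 := by
      have h := hle x
      rw [hfx, norm_zero] at h
      exact norm_le_zero_iff.mp h
    simp [hgx, hfx]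
  · obtain ⟨q, hq⟩ := padic_exists_mul hfx (hle x)
    have hb : ∀ n, dist (cNfun f g n x) q ≤ ((p:ℝ)⁻¹)^n := by
      intro n
      obtain ⟨r, hrlt, hmem, hest⟩ := Vset_cover f g hle hfx n
      rw [cNfun_eval_of_mem f g hrlt (subset_closure hmem), dist_eq_norm, norm_sub_rev,
        ← hpow n]
      exact hest q hq
    have hqlim : Filter.Tendsto (fun n => cNfun f g n x) Filter.atTop (nhds q) := by
      rw [tendsto_iff_dist_tendsto_zero]
      apply squeeze_zero (fun n => dist_nonneg) hb
      apply tendsto_pow_atTop_nhds_zero_of_lt_one (by positivity) (inv_lt_one_of_one_lt₀ hp1)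
    have hcq : c x = q := tendsto_nhds_unique hxlim hqlim
    rw [ContinuousMap.mul_apply, hcq, ← hq]

open Classical in
lemma indicCM_apply (V : Set S) (hV : IsClopen V) (x : S) :
    indicCM (p := p) V hV x = if x ∈ V then 1 else 0 := rfl

lemma pair_lemma (f g : C(S, ℤ_[p])) :
    ∃ h : C(S, ℤ_[p]), Ideal.span {f, g} = Ideal.span {h} := by
  classical
  set U : Set S := {x | ‖g x‖ < ‖f x‖} with hU
  have hUopen : IsOpen U := by
    rw [hU]
    exact isOpen_lt (Continuous.norm (map_continuous g)) (Continuous.norm (map_continuous f))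
  have hVclopen : IsClopen (closure U) :=
    ⟨isClosed_closure, ExtremallyDisconnected.open_closure _ hUopen⟩
  set e : C(S, ℤ_[p]) := indicCM (closure U) hVclopen with he
  set h : C(S, ℤ_[p]) := e * f + (1 - e) * g with hh
  have heval1 : ∀ x ∈ closure U, h x = f x := by
    intro x hx
    simp [hh, he, indicCM_apply, hx]
  have heval2 : ∀ x ∉ closure U, h x = g x := by
    intro x hx
    simp [hh, he, indicCM_apply, hx]
  have hgf : ∀ x ∈ closure U, ‖g x‖ ≤ ‖f x‖ := by
    intro x hx
    exact closure_minimal (fun y hy => le_of_lt hy)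
      (isClosed_le (Continuous.norm (map_continuous g)) (Continuous.norm (map_continuous f))) hx
  have hfh : ∀ x, ‖f x‖ ≤ ‖h x‖ := by
    intro x
    by_cases hx : x ∈ closure U
    · rw [heval1 x hx]
    · rw [heval2 x hx]
      exact le_of_not_gt (fun hc => hx (subset_closure hc))
  have hgh : ∀ x, ‖g x‖ ≤ ‖h x‖ := by
    intro x
    by_cases hx : x ∈ closure U
    · rw [heval1 x hx]; exact hgf x hx
    · rw [heval2 x hx]
  obtain ⟨a, ha⟩ := div_lemma_s1 h f hfh
  obtain ⟨b, hb⟩ := div_lemma_s1 h g hgh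
  refine ⟨h, le_antisymm ?_ ?_⟩
  · rw [Ideal.span_le]
    rintro y hy
    rcases hy with rfl | rfl
    · exact Ideal.mem_span_singleton'.mpr ⟨a, ha.symm⟩
    · exact Ideal.mem_span_singleton'.mpr ⟨b, hb.symm⟩
  · rw [Ideal.span_le, Set.singleton_subset_iff]
    exact Ideal.add_mem _
      (Ideal.mul_mem_left _ _ (Ideal.subset_span (by simp)))
      (Ideal.mul_mem_left _ _ (Ideal.subset_span (by simp)))

lemma span_finset (s : Finset C(S, ℤ_[p])) :
    ∃ h, Ideal.span (s : Set C(S, ℤ_[p])) = Ideal.span {h} := by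
  classical
  induction s using Finset.induction_on with
  | empty =>
      refine ⟨0, ?_⟩
      rw [Finset.coe_empty, Ideal.span_empty, Ideal.span_singleton_eq_bot.mpr rfl]
  | @insert a s ha ih =>
      obtain ⟨h', hh'⟩ := ih
      obtain ⟨h, hh⟩ := pair_lemma a h'
      refine ⟨h, ?_⟩
      rw [Finset.coe_insert, Ideal.span_insert, hh', ← Ideal.span_insert]
      exact hh

set_option synthInstance.maxHeartbeats 1000000 in
set_option maxHeartbeats 1000000 in
lemma projective_span_singleton (h : C(S, ℤ_[p])) :
    Module.Projective C(S, ℤ_[p]) (Ideal.span {h} : Ideal C(S, ℤ_[p])) := by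
  classical
  set D : Set S := {x | h x ≠ 0} with hD
  have hDopen : IsOpen D := isOpen_ne_fun (map_continuous h) continuous_const
  have hVclopen : IsClopen (closure D) :=
    ⟨isClosed_closure, ExtremallyDisconnected.open_closure _ hDopen⟩
  set e : C(S, ℤ_[p]) := indicCM (closure D) hVclopen with he
  have hcancel : ∀ b : C(S, ℤ_[p]), b * h = 0 → b * e = 0 := by
    intro b hb
    ext x
    by_cases hx : x ∈ closure D
    · have hbD : D ⊆ {y | b y = 0} := by
        intro y hy
        have hby : b y * h y = 0 := by
          have := congrFun (congrArg DFunLike.coe hb) y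
          simpa using this
        exact (mul_eq_zero.mp hby).resolve_right hy
      have hbx : b x = 0 :=
        closure_minimal hbD (isClosed_eq (map_continuous b) continuous_const) hx
      simp [hbx]
    · simp [he, indicCM_apply, hx]
  have heh : e * h = h := by
    ext x
    by_cases hx : x ∈ closure D
    · simp [he, indicCM_apply, hx]
    · have hhx : h x = 0 := by
        by_contra hne
        exact hx (subset_closure hne)
      simp [he, indicCM_apply, hx, hhx]
  let sMap : C(S, ℤ_[p]) →ₗ[C(S, ℤ_[p])] (Ideal.span {h} : Ideal C(S, ℤ_[p])) := {
    toFun := fun a => ⟨a * h, Ideal.mul_mem_left _ _ (Ideal.subset_span rfl)⟩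
    map_add' := by intro a b; apply Subtype.ext; simp [add_mul]
    map_smul' := by
      intro m a; apply Subtype.ext
      simp [smul_eq_mul, mul_assoc] }
  have hrep : ∀ u : (Ideal.span {h} : Ideal C(S, ℤ_[p])), ∃ a : C(S, ℤ_[p]), (u : C(S, ℤ_[p])) = a * h := by
    intro u
    obtain ⟨a, ha⟩ := Ideal.mem_span_singleton'.mp u.2
    exact ⟨a, ha.symm⟩
  choose rep hrep' using hrep
  have hkey : ∀ (u : (Ideal.span {h} : Ideal C(S, ℤ_[p]))) (a : C(S, ℤ_[p])),
      (u : C(S, ℤ_[p])) = a * h → rep u * e = a * e := by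
    intro u a ha
    have hz : (rep u - a) * h = 0 := by
      rw [sub_mul, ← hrep' u, ← ha, sub_self]
    have hz2 := hcancel _ hz
    rw [sub_mul] at hz2
    exact sub_eq_zero.mp hz2
  let iMap : (Ideal.span {h} : Ideal C(S, ℤ_[p])) →ₗ[C(S, ℤ_[p])] C(S, ℤ_[p]) := {
    toFun := fun u => rep u * e
    map_add' := by
      intro u v
      show rep (u + v) * e = rep u * e + rep v * e
      have h1 : ((u + v : (Ideal.span {h} : Ideal C(S, ℤ_[p]))) : C(S, ℤ_[p]))
          = (rep u + rep v) * h := by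
        rw [Submodule.coe_add, add_mul, hrep' u, hrep' v]
      rw [hkey (u + v) _ h1, add_mul]
    map_smul' := by
      intro m u
      simp only [RingHom.id_apply]
      have h1 : ((m • u : (Ideal.span {h} : Ideal C(S, ℤ_[p]))) : C(S, ℤ_[p]))
          = (m * rep u) * h := by
        rw [Submodule.coe_smul, smul_eq_mul, hrep' u, mul_assoc]
      rw [hkey _ _ h1, smul_eq_mul, mul_assoc]
  }
  apply Module.Projective.of_split iMap sMap
  apply LinearMap.ext
  intro u
  apply Subtype.ext
  show (rep u * e) * h = (u : C(S, ℤ_[p]))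
  rw [mul_assoc, heh, ← hrep' u]


/-- For a prime `p` and an extremally disconnected profinite set `S`, the ring
`C(S, ℤ_[p])` of continuous `ℤ_p`-valued functions is semi-hereditary; in fact every finitely
generated ideal is principal and projective. -/
theorem stmt_1 (p : ℕ) [Fact p.Prime] (S : Type) [TopologicalSpace S] [CompactSpace S]
    [T2Space S] [TotallyDisconnectedSpace S] [ExtremallyDisconnected S]
    (I : Ideal C(S, ℤ_[p])) (hI : I.FG) :
    Submodule.IsPrincipal I ∧ Module.Projective C(S, ℤ_[p]) I := by
  obtain ⟨s, hs⟩ := hI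
  obtain ⟨h, hh⟩ := span_finset s
  have heq : I = Ideal.span {h} := hs.symm.trans hh
  subst heq
  exact ⟨⟨⟨h, rfl⟩⟩, projective_span_singleton h⟩
end

section
/- Let p be a prime and let S be an extremally disconnected profinite set. Then the ring C(S, ℚ_p) of continuous ℚ_p-valued functions on S is semi-hereditary; in fact every finitely generated ideal of C(S, ℚ_p) is principal and projective as a C(S, ℚ_p)-module. -/
section Aux

set_option linter.unusedSectionVars false

open Set

variable {p : ℕ} [Fact p.Prime] {S : Type} [TopologicalSpace S] [CompactSpace S]
    [T2Space S] [ExtremallyDisconnected S]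

/-- Extension lemma: a bounded continuous function on an open subset of an extremally
disconnected compact Hausdorff space extends continuously. -/
lemma aux_ext (U : Set S) (hU : IsOpen U) (φ : S → ℚ_[p])
    (hφ : ContinuousOn φ U) (hb : ∀ s ∈ U, ‖φ s‖ ≤ 1) :
    ∃ ψ : C(S, ℚ_[p]), ∀ s ∈ U, ψ s = φ s := by
  classical
  set Γ : Set (S × ℚ_[p]) := (fun s => (s, φ s)) '' U with hΓ
  set T : Set (S × ℚ_[p]) := closure Γ ∪ ((closure U)ᶜ ×ˢ ({0} : Set ℚ_[p])) with hT
  have hclU : IsOpen (closure U) := ExtremallyDisconnected.open_closure U hU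
  -- closure Γ is compact
  have hΓsub : closure Γ ⊆ (univ : Set S) ×ˢ Metric.closedBall (0:ℚ_[p]) 1 := by
    apply closure_minimal
    · rintro ⟨s, x⟩ ⟨u, hu, h⟩
      obtain ⟨rfl, rfl⟩ := Prod.mk.injEq .. ▸ h
      refine ⟨trivial, ?_⟩
      simpa [Metric.mem_closedBall, dist_eq_norm] using hb _ hu
    · exact isClosed_univ.prod Metric.isClosed_closedBall
  have hcomp1 : IsCompact (closure Γ) :=
    ((isCompact_univ.prod (isCompact_closedBall _ _)).of_isClosed_subset isClosed_closure hΓsub)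
  have hcomp2 : IsCompact (((closure U)ᶜ : Set S) ×ˢ ({0} : Set ℚ_[p])) :=
    (hclU.isClosed_compl.isCompact).prod isCompact_singleton
  have hTcomp : IsCompact T := hcomp1.union hcomp2
  haveI : CompactSpace T := isCompact_iff_compactSpace.mp hTcomp
  -- fibers of the first projection over `U` are singletons
  have hfiber : ∀ z ∈ closure Γ, z.1 ∈ U → z.2 = φ z.1 := by
    rintro ⟨s, x⟩ hz hs
    by_contra hne
    have hε : 0 < dist x (φ s) := dist_pos.mpr hne
    have hct : ContinuousAt φ s := hφ.continuousAt (hU.mem_nhds hs)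
    have hW : {t : S | dist (φ t) (φ s) < dist x (φ s) / 2} ∈ nhds s := by
      exact hct (Metric.ball_mem_nhds _ (by linarith))
    have hN : ({t : S | dist (φ t) (φ s) < dist x (φ s) / 2} ∩ U) ×ˢ
        Metric.ball x (dist x (φ s) / 2) ∈ nhds (s, x) := by
      exact prod_mem_nhds (Filter.inter_mem hW (hU.mem_nhds hs))
        (Metric.ball_mem_nhds _ (by linarith))
    obtain ⟨z, hz1, hz2⟩ := mem_closure_iff_nhds.mp hz _ hN
    obtain ⟨u, hu, rfl⟩ := hz2
    obtain ⟨⟨h1, -⟩, h2⟩ := hz1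
    simp only [Metric.mem_ball, mem_setOf_eq] at h1 h2
    have := dist_triangle x (φ u) (φ s)
    rw [dist_comm x (φ u)] at this
    linarith
  -- the first projection, `T → S`, is surjective
  have hsurj : ∀ s : S, ∃ x : ℚ_[p], (s, x) ∈ T := by
    intro s
    by_cases hs : s ∈ closure U
    · have himg : closure U ⊆ Prod.fst '' closure Γ := by
        apply closure_minimal
        · intro u hu
          exact ⟨(u, φ u), subset_closure ⟨u, hu, rfl⟩, rfl⟩
        · exact (hcomp1.image continuous_fst).isClosed
      obtain ⟨z, hz, hz1⟩ := himg hs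
      exact ⟨z.2, Or.inl (by rw [← hz1]; simpa using hz)⟩
    · exact ⟨0, Or.inr ⟨hs, rfl⟩⟩
  -- use projectivity of `S`
  have hproj := CompactT2.ExtremallyDisconnected.projective (A := S)
      (f := id (α := S)) (g := fun z : T => z.1.1)
      continuous_id (continuous_fst.comp continuous_subtype_val)
      (fun s => by obtain ⟨x, hx⟩ := hsurj s; exact ⟨⟨(s, x), hx⟩, rfl⟩)
  obtain ⟨h, hcont, hgh⟩ := hproj
  refine ⟨⟨fun s => (h s).1.2, (continuous_snd.comp continuous_subtype_val).comp hcont⟩, ?_⟩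
  intro u hu
  have h1 : (h u).1.1 = u := congrFun hgh u
  have : (h u).1 ∈ T := (h u).2
  rcases this with hmem | hmem
  · have := hfiber _ hmem (by rw [h1]; exact hu)
    simpa [h1] using this
  · exact absurd (h1 ▸ hmem.1) (by simpa using subset_closure hu)

/-- Division lemma: if `‖f‖ ≤ ‖g‖` pointwise, then `g` divides `f` in `C(S, ℚ_[p])`. -/
lemma aux_div (f g : C(S, ℚ_[p])) (h : ∀ s, ‖f s‖ ≤ ‖g s‖) :
    ∃ k : C(S, ℚ_[p]), f = g * k := by
  have hU : IsOpen {s : S | g s ≠ 0} := isOpen_ne_fun g.continuous continuous_const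
  obtain ⟨ψ, hψ⟩ := aux_ext {s : S | g s ≠ 0} hU (fun s => f s / g s)
    (ContinuousOn.div (f.continuous.continuousOn) (g.continuous.continuousOn) (fun s hs => hs))
    (by
      intro s hs
      rw [norm_div]
      exact div_le_one_of_le₀ (h s) (norm_nonneg _))
  refine ⟨ψ, ?_⟩
  ext s
  by_cases hs : g s = 0
  · have : ‖f s‖ ≤ 0 := by simpa [hs] using h s
    have hf : f s = 0 := norm_le_zero_iff.mp this
    simp [hf, hs]
  · have := hψ s hs
    simp only [ContinuousMap.mul_apply, this]
    field_simp

/-- Bézout step: the ideal generated by two elements is principal. -/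
lemma aux_pair (f g : C(S, ℚ_[p])) :
    ∃ h : C(S, ℚ_[p]), Ideal.span {f, g} = Ideal.span {h} := by
  classical
  set D : Set S := closure {s : S | ‖g s‖ < ‖f s‖} with hD
  have hDopen : IsOpen D := ExtremallyDisconnected.open_closure _
    (isOpen_lt g.continuous.norm f.continuous.norm)
  have hDclopen : IsClopen D := ⟨isClosed_closure, hDopen⟩
  set e : C(S, ℚ_[p]) := ⟨fun s => if s ∈ D then 1 else 0, by
    apply continuous_if
    · intro a ha
      have hfr : frontier {x : S | x ∈ D} = ∅ := hDclopen.frontier_eq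
      rw [hfr] at ha
      exact absurd ha (notMem_empty a)
    · exact continuousOn_const
    · exact continuousOn_const⟩ with he
  set h : C(S, ℚ_[p]) := e * f + (1 - e) * g with hh
  have hval : ∀ s, h s = if s ∈ D then f s else g s := by
    intro s
    by_cases hs : s ∈ D <;> simp [hh, he, hs]
  have hge : ∀ s ∈ D, ‖g s‖ ≤ ‖f s‖ := by
    intro s hs
    have : s ∈ closure {s : S | ‖g s‖ ≤ ‖f s‖} := closure_mono (show {s : S | ‖g s‖ < ‖f s‖} ⊆ {s : S | ‖g s‖ ≤ ‖f s‖} from fun t ht => by simp only [mem_setOf_eq] at ht ⊢; exact le_of_lt ht) hs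
    rwa [IsClosed.closure_eq] at this
    exact isClosed_le g.continuous.norm f.continuous.norm
  have hf : ∀ s, ‖f s‖ ≤ ‖h s‖ := by
    intro s
    rw [hval s]
    by_cases hs : s ∈ D
    · simp [hs]
    · simp only [hs, if_false]
      exact le_of_not_gt (fun hlt => hs (subset_closure hlt))
  have hg : ∀ s, ‖g s‖ ≤ ‖h s‖ := by
    intro s
    rw [hval s]
    by_cases hs : s ∈ D
    · simpa [hs] using hge s hs
    · simp [hs]
  obtain ⟨k, hk⟩ := aux_div f h hf
  obtain ⟨l, hl⟩ := aux_div g h hg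
  refine ⟨h, le_antisymm ?_ ?_⟩
  · rw [Ideal.span_le]
    rintro x (rfl | rfl)
    · exact hk ▸ Ideal.mem_span_singleton.mpr ⟨k, rfl⟩
    · exact hl ▸ Ideal.mem_span_singleton.mpr ⟨l, rfl⟩
  · rw [Ideal.span_le, singleton_subset_iff]
    have hfm : f ∈ Ideal.span {f, g} := Ideal.subset_span (by left; rfl)
    have hgm : g ∈ Ideal.span {f, g} := Ideal.subset_span (by right; rfl)
    exact Ideal.add_mem _ (Ideal.mul_mem_left _ _ hfm) (Ideal.mul_mem_left _ _ hgm)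

/-- Every finitely generated ideal of `C(S, ℚ_[p])` is principal. -/
lemma aux_principal (I : Ideal C(S, ℚ_[p])) (hI : I.FG) :
    ∃ h : C(S, ℚ_[p]), I = Ideal.span {h} := by
  classical
  obtain ⟨T, hT⟩ := hI
  have key : ∀ (T : Finset C(S, ℚ_[p])), ∃ h : C(S, ℚ_[p]),
      Ideal.span (T : Set C(S, ℚ_[p])) = Ideal.span {h} := by
    intro T
    induction T using Finset.induction_on with
    | empty =>
      refine ⟨0, ?_⟩
      rw [Finset.coe_empty, Ideal.span_empty]
      exact ((Ideal.span_singleton_eq_bot).mpr rfl).symm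
    | insert _ _ hnot ih =>
      rename_i a T'
      obtain ⟨b, hb⟩ := ih
      obtain ⟨h, hh⟩ := aux_pair a b
      refine ⟨h, ?_⟩
      rw [Finset.coe_insert, Ideal.span_insert, hb, ← Ideal.span_insert]
      have : (insert a {b} : Set C(S, ℚ_[p])) = {a, b} := rfl
      rw [this, hh]
  obtain ⟨h, hh⟩ := key T
  exact ⟨h, by rw [← hT, hh]⟩

/-- The ideal generated by a single element of `C(S, ℚ_[p])` is projective. -/
lemma aux_proj (h : C(S, ℚ_[p])) (I : Ideal C(S, ℚ_[p])) (hspan : I = Ideal.span {h}) :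
    Module.Projective C(S, ℚ_[p]) I := by
  classical
  set V : Set S := closure {s : S | h s ≠ 0} with hV
  have hVopen : IsOpen V := ExtremallyDisconnected.open_closure _
    (isOpen_ne_fun h.continuous continuous_const)
  have hVclopen : IsClopen V := ⟨isClosed_closure, hVopen⟩
  set u : C(S, ℚ_[p]) := ⟨fun s => if s ∈ V then 1 else 0, by
    apply continuous_if
    · intro a ha
      have hfr : frontier {x : S | x ∈ V} = ∅ := hVclopen.frontier_eq
      rw [hfr] at ha
      exact absurd ha (notMem_empty a)
    · exact continuousOn_const
    · exact continuousOn_const⟩ with hu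
  -- (i) `u * h = h`
  have hi : u * h = h := by
    ext s
    by_cases hs : h s = 0
    · simp [hs]
    · have : s ∈ V := subset_closure hs
      simp [hu, this]
  -- (ii) annihilator of `h` is killed by `u`
  have hii : ∀ x : C(S, ℚ_[p]), x * h = 0 → u * x = 0 := by
    intro x hx
    ext s
    by_cases hs : s ∈ V
    · have hzero : V ⊆ {t : S | x t = 0} := by
        apply closure_minimal
        · intro t ht
          have := ContinuousMap.congr_fun hx t
          simp only [ContinuousMap.mul_apply, ContinuousMap.zero_apply] at this
          exact mul_eq_zero.mp this |>.resolve_right ht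
        · exact isClosed_eq x.continuous continuous_const
      have : x s = 0 := hzero hs
      simp [this]
    · simp [hu, hs]
  -- well-definedness
  have wd : ∀ c c' : C(S, ℚ_[p]), c * h = c' * h → u * c = u * c' := by
    intro c c' hcc
    have h1 : (c - c') * h = 0 := by rw [sub_mul, hcc, sub_self]
    have h2 := hii _ h1
    rw [mul_sub, sub_eq_zero] at h2
    exact h2
  -- selector
  have hmem : ∀ y : I, ∃ c : C(S, ℚ_[p]), c * h = (y : C(S, ℚ_[p])) := by
    intro y
    have h2 : ∀ v ∈ I, v ∈ Ideal.span {h} := fun v hv => hspan ▸ hv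
    exact Ideal.mem_span_singleton'.mp (h2 _ y.2)
  set sel : I → C(S, ℚ_[p]) := fun y => Classical.choose (hmem y) with hsel
  have hsel' : ∀ y : I, sel y * h = (y : C(S, ℚ_[p])) := fun y => Classical.choose_spec (hmem y)
  -- the retraction
  set σ : I →ₗ[C(S, ℚ_[p])] C(S, ℚ_[p]) :=
    { toFun := fun y => u * sel y
      map_add' := by
        intro y z
        rw [← mul_add]
        apply wd
        rw [add_mul, hsel', hsel', hsel']
        rfl
      map_smul' := by
        intro c y
        simp only [RingHom.id_apply, smul_eq_mul]
        rw [show c * (u * sel y) = u * (c * sel y) by ring]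
        apply wd
        rw [mul_assoc, hsel', hsel']
        rfl } with hσ
  set π : C(S, ℚ_[p]) →ₗ[C(S, ℚ_[p])] I :=
    LinearMap.codRestrict I (LinearMap.toSpanSingleton _ _ h)
      (fun c => by
        rw [hspan]
        exact Ideal.mem_span_singleton'.mpr ⟨c, by rw [LinearMap.toSpanSingleton_apply, smul_eq_mul]⟩) with hπ
  apply Module.Projective.of_split σ π
  have key : ∀ y : I, π (σ y) = y := by
    intro y
    apply Subtype.ext
    show (u * sel y) • h = (y : C(S, ℚ_[p]))
    rw [smul_eq_mul, show u * sel y * h = sel y * (u * h) by ring, hi, hsel']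
  exact LinearMap.ext fun y => key y


end Aux

/-- For a prime `p` and an extremally disconnected profinite set `S`, the ring
`C(S, ℚ_[p])` of continuous `ℚ_p`-valued functions is semi-hereditary; in fact every finitely
generated ideal is principal and projective. -/
theorem stmt_2 (p : ℕ) [Fact p.Prime] (S : Type) [TopologicalSpace S] [CompactSpace S]
    [T2Space S] [TotallyDisconnectedSpace S] [ExtremallyDisconnected S]
    (I : Ideal C(S, ℚ_[p])) (hI : I.FG) :
    Submodule.IsPrincipal I ∧ Module.Projective C(S, ℚ_[p]) I := by
  obtain ⟨h, hh⟩ := aux_principal I hI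
  exact ⟨⟨⟨h, by rw [hh, Ideal.span, Ideal.submodule_span_eq]⟩⟩, aux_proj h I hh⟩
end

section
/- Let p be a prime, let S be an extremally disconnected profinite set, and let f, g ∈ C(S, ℤ_p). Then there exists h ∈ C(S, ℤ_p) such that |f(s)| ≤ |h(s)| and |g(s)| ≤ |h(s)| for all s ∈ S and such that the ideal of C(S, ℤ_p) generated by f and g equals the principal ideal generated by h. In particular, every ideal of C(S, ℤ_p) generated by two elements is principal. -/
/-- In `ℤ_[p]`, if `‖a‖ ≤ ‖b‖` then `a = c * b` for some `c`. -/
lemma padicInt_exists_mul_of_norm_le {p : ℕ} [Fact p.Prime] (a b : ℤ_[p])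
    (h : ‖a‖ ≤ ‖b‖) : ∃ c : ℤ_[p], a = c * b := by
  by_cases hb : b = 0
  · refine ⟨0, ?_⟩
    have : ‖a‖ ≤ 0 := by simpa [hb] using h
    have ha : a = 0 := norm_le_zero_iff.mp this
    simp [ha]
  · have hbq : (b : ℚ_[p]) ≠ 0 := fun h' => hb (Subtype.ext h')
    have hbpos : (0 : ℝ) < ‖b‖ := norm_pos_iff.mpr hb
    refine ⟨⟨(a : ℚ_[p]) / (b : ℚ_[p]), ?_⟩, ?_⟩
    · rw [norm_div]
      rw [PadicInt.padic_norm_e_of_padicInt, PadicInt.padic_norm_e_of_padicInt]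
      exact div_le_one_of_le₀ h (le_of_lt hbpos)
    · apply Subtype.ext
      push_cast
      show (a : ℚ_[p]) = (a : ℚ_[p]) / b * b
      field_simp

/-- If `‖f s‖ ≤ ‖g s‖` everywhere, then `f` is a multiple of `g` in `C(S, ℤ_[p])`,
for `S` extremally disconnected compact Hausdorff. -/
lemma exists_continuous_factor {p : ℕ} [Fact p.Prime] {S : Type} [TopologicalSpace S]
    [CompactSpace S] [T2Space S] [ExtremallyDisconnected S]
    (f g : C(S, ℤ_[p])) (hle : ∀ s, ‖f s‖ ≤ ‖g s‖) :
    ∃ a : C(S, ℤ_[p]), f = a * g := by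
  -- Target space: pairs with norm inequality
  let D : Set (ℤ_[p] × ℤ_[p]) := {x | ‖x.1‖ ≤ ‖x.2‖}
  have hDclosed : IsClosed D :=
    isClosed_le (continuous_norm.comp continuous_fst) (continuous_norm.comp continuous_snd)
  -- Cover space: witnessed factorizations
  let E : Set ((ℤ_[p] × ℤ_[p]) × ℤ_[p]) := {x | x.1.1 = x.2 * x.1.2}
  have hEclosed : IsClosed E :=
    isClosed_eq (continuous_fst.fst)
      (continuous_snd.mul continuous_fst.snd)
  haveI : CompactSpace D := isCompact_iff_compactSpace.mp hDclosed.isCompact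
  haveI : CompactSpace E := isCompact_iff_compactSpace.mp hEclosed.isCompact
  -- The projection E → D
  let π : E → D := fun x => ⟨x.1.1, by
    have hx : x.1.1.1 = x.1.2 * x.1.1.2 := x.2
    show ‖x.1.1.1‖ ≤ ‖x.1.1.2‖
    rw [hx, norm_mul]
    calc ‖x.1.2‖ * ‖x.1.1.2‖ ≤ 1 * ‖x.1.1.2‖ := by
          exact mul_le_mul_of_nonneg_right (PadicInt.norm_le_one _) (norm_nonneg _)
      _ = ‖x.1.1.2‖ := one_mul _⟩
  have hπcont : Continuous π := by
    apply Continuous.subtype_mk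
    exact continuous_fst.comp continuous_subtype_val
  have hπsurj : Function.Surjective π := by
    rintro ⟨⟨a, b⟩, hab⟩
    obtain ⟨c, hc⟩ := padicInt_exists_mul_of_norm_le a b hab
    exact ⟨⟨((a, b), c), hc⟩, rfl⟩
  -- The map S → D
  let φ : S → D := fun s => ⟨(f s, g s), hle s⟩
  have hφcont : Continuous φ := by
    apply Continuous.subtype_mk
    exact f.continuous.prodMk g.continuous
  -- Lift via projectivity
  obtain ⟨ψ, hψcont, hψ⟩ :=
    CompactT2.ExtremallyDisconnected.projective hφcont hπcont hπsurj
  refine ⟨⟨fun s => (ψ s).1.2, ?_⟩, ?_⟩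
  · exact continuous_snd.comp (continuous_subtype_val.comp hψcont)
  · ext s
    have h1 : π (ψ s) = φ s := congrFun hψ s
    have h2 : ((ψ s : (ℤ_[p] × ℤ_[p]) × ℤ_[p]).1 : ℤ_[p] × ℤ_[p]) = (f s, g s) :=
      congrArg Subtype.val h1
    have h3 : (ψ s : (ℤ_[p] × ℤ_[p]) × ℤ_[p]).1.1
        = (ψ s : (ℤ_[p] × ℤ_[p]) × ℤ_[p]).2 * (ψ s : (ℤ_[p] × ℤ_[p]) × ℤ_[p]).1.2 :=
      (ψ s).2
    have hf : (ψ s : (ℤ_[p] × ℤ_[p]) × ℤ_[p]).1.1 = f s := by rw [h2]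
    have hg : (ψ s : (ℤ_[p] × ℤ_[p]) × ℤ_[p]).1.2 = g s := by rw [h2]
    show f s = (ψ s : (ℤ_[p] × ℤ_[p]) × ℤ_[p]).2 * g s
    rw [← hf, ← hg, h3]

/-- Let `p` be a prime, `S` an extremally disconnected profinite set and
`f, g ∈ C(S, ℤ_[p])`. Then there is `h ∈ C(S, ℤ_[p])` with `‖f s‖ ≤ ‖h s‖` and `‖g s‖ ≤ ‖h s‖`
for all `s`, such that the ideal generated by `f` and `g` is the principal ideal generated by
`h`; in particular every ideal of `C(S, ℤ_[p])` generated by two elements is principal. -/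
theorem stmt_3 (p : ℕ) [Fact p.Prime] (S : Type) [TopologicalSpace S] [CompactSpace S]
    [T2Space S] [TotallyDisconnectedSpace S] [ExtremallyDisconnected S]
    (f g : C(S, ℤ_[p])) :
    (∃ h : C(S, ℤ_[p]), (∀ s : S, ‖f s‖ ≤ ‖h s‖ ∧ ‖g s‖ ≤ ‖h s‖) ∧
      Ideal.span {f, g} = Ideal.span {h}) ∧
    Submodule.IsPrincipal (Ideal.span {f, g} : Ideal C(S, ℤ_[p])) := by
  classical
  -- the open set where ‖g‖ < ‖f‖, and its clopen closure
  set U : Set S := {s | ‖g s‖ < ‖f s‖} with hU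
  have hUopen : IsOpen U :=
    isOpen_lt (continuous_norm.comp g.continuous) (continuous_norm.comp f.continuous)
  set V : Set S := closure U with hV
  have hVopen : IsOpen V := ExtremallyDisconnected.open_closure U hUopen
  have hVclosed : IsClosed V := isClosed_closure
  have hVclopen : IsClopen V := ⟨hVclosed, hVopen⟩
  have hfrontier : frontier V = ∅ := hVclopen.frontier_eq
  -- on V, ‖g‖ ≤ ‖f‖; off V, ‖f‖ ≤ ‖g‖
  have hVle : ∀ s ∈ V, ‖g s‖ ≤ ‖f s‖ := by
    intro s hs
    have hsub : V ⊆ {s | ‖g s‖ ≤ ‖f s‖} := by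
      apply closure_minimal
      · intro t ht
        have ht' : ‖g t‖ < ‖f t‖ := ht
        exact le_of_lt ht'
      · exact isClosed_le (continuous_norm.comp g.continuous) (continuous_norm.comp f.continuous)
    exact hsub hs
  have hVcle : ∀ s, s ∉ V → ‖f s‖ ≤ ‖g s‖ := by
    intro s hs
    have : s ∉ U := fun h => hs (subset_closure h)
    exact le_of_not_gt this
  -- define h as piecewise
  have hcont : Continuous (V.piecewise f g) := by
    apply Continuous.piecewise
    · intro a ha
      rw [hfrontier] at ha
      exact absurd ha (Set.notMem_empty a)
    · exact f.continuous
    · exact g.continuous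
  set h : C(S, ℤ_[p]) := ⟨V.piecewise f g, hcont⟩ with hh
  have hval : ∀ s, h s = if s ∈ V then f s else g s := fun s => rfl
  have hmax : ∀ s : S, ‖f s‖ ≤ ‖h s‖ ∧ ‖g s‖ ≤ ‖h s‖ := by
    intro s
    rw [hval s]
    by_cases hs : s ∈ V
    · simp only [hs, if_pos]
      exact ⟨le_refl _, hVle s hs⟩
    · simp only [hs, if_neg, if_false]
      exact ⟨hVcle s hs, le_refl _⟩
  -- indicator function
  have econt : Continuous (fun s : S => if s ∈ V then (1 : ℤ_[p]) else 0) := by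
    apply Continuous.piecewise
    · intro a ha
      rw [hfrontier] at ha
      exact absurd ha (Set.notMem_empty a)
    · exact continuous_const
    · exact continuous_const
  set e : C(S, ℤ_[p]) := ⟨fun s => if s ∈ V then (1 : ℤ_[p]) else 0, econt⟩ with he
  -- h ∈ span {f, g}
  have hmem : h ∈ Ideal.span ({f, g} : Set C(S, ℤ_[p])) := by
    rw [Ideal.mem_span_pair]
    refine ⟨e, 1 - e, ?_⟩
    ext s
    simp only [ContinuousMap.add_apply, ContinuousMap.mul_apply, ContinuousMap.sub_apply,
      ContinuousMap.one_apply]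
    rw [hval s]
    by_cases hs : s ∈ V
    · simp [he, hs]
    · simp [he, hs]
  -- f, g ∈ span {h}
  obtain ⟨a, ha⟩ := exists_continuous_factor f h (fun s => (hmax s).1)
  obtain ⟨b, hb⟩ := exists_continuous_factor g h (fun s => (hmax s).2)
  have hspan : Ideal.span ({f, g} : Set C(S, ℤ_[p])) = Ideal.span {h} := by
    apply le_antisymm
    · rw [Ideal.span_le]
      rintro x (rfl | rfl)
      · rw [SetLike.mem_coe, Ideal.mem_span_singleton]
        exact ⟨a, by rw [ha, mul_comm]⟩
      · rw [SetLike.mem_coe, Ideal.mem_span_singleton]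
        exact ⟨b, by rw [hb, mul_comm]⟩
    · rw [Ideal.span_le, Set.singleton_subset_iff]
      exact hmem
  exact ⟨⟨h, hmax, hspan⟩, ⟨h, by rw [hspan, Ideal.submodule_span_eq]⟩⟩
end

section
/- Let S be an extremally disconnected compact Hausdorff space and let Λ be a commutative T1 topological ring without zero divisors. Let f ∈ C(S, Λ), set U = {s ∈ S : f(s) ≠ 0}, and let e ∈ C(S, Λ) be the characteristic function of the complement of the closure of U (which is a clopen subset of S, so e is continuous and idempotent). Then the annihilator ideal Ann(f) = {g ∈ C(S, Λ) : g·f = 0} is the principal ideal generated by e; consequently the short exact sequence 0 → Ann(f) → C(S, Λ) → (f) → 0 splits and the principal ideal (f) is a projective C(S, Λ)-module. -/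
/-- Let `S` be an extremally disconnected compact Hausdorff space and `Λ` a
commutative T1 topological ring without zero divisors. Let `f ∈ C(S, Λ)`, let
`U = {s | f s ≠ 0}` and let `e ∈ C(S, Λ)` be the characteristic function of the complement of
the closure of `U`. Then the annihilator of `f` is the principal ideal generated by `e`;
consequently the surjection `C(S, Λ) → (f)`, `g ↦ g * f`, splits and the principal ideal `(f)`
is a projective `C(S, Λ)`-module. -/
theorem stmt_4 (S : Type) [TopologicalSpace S] [CompactSpace S] [T2Space S]
    [ExtremallyDisconnected S]
    (Λ : Type) [CommRing Λ] [TopologicalSpace Λ] [IsTopologicalRing Λ] [T1Space Λ]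
    [NoZeroDivisors Λ]
    (f e : C(S, Λ))
    (he : ∀ s : S, (s ∈ closure {t : S | f t ≠ 0} → e s = 0) ∧
      (s ∉ closure {t : S | f t ≠ 0} → e s = 1)) :
    (∀ g : C(S, Λ), g * f = 0 ↔ g ∈ Ideal.span {e}) ∧
    (∃ σ : (Ideal.span {f} : Ideal C(S, Λ)) →ₗ[C(S, Λ)] C(S, Λ),
      ∀ x : (Ideal.span {f} : Ideal C(S, Λ)), σ x * f = (x : C(S, Λ))) ∧
    Module.Projective C(S, Λ) (Ideal.span {f} : Ideal C(S, Λ)) := by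
    classical
  have hef : e * f = 0 := by
    ext s
    by_cases h : s ∈ closure {t : S | f t ≠ 0}
    · simp [(he s).1 h]
    · have hfs : f s = 0 := by
        by_contra hf
        exact h (subset_closure hf)
      simp [hfs]
  have key : ∀ g : C(S, Λ), g * f = 0 → g = g * e := by
    intro g hg
    ext s
    by_cases h : s ∈ closure {t : S | f t ≠ 0}
    · have hsub : closure {t : S | f t ≠ 0} ⊆ {t : S | g t = 0} := by
        apply closure_minimal
        · intro t ht
          have h0 : g t * f t = 0 := by
            have := ContinuousMap.congr_fun hg t
            simpa using this
          rcases mul_eq_zero.mp h0 with h1 | h1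
          · exact h1
          · exact absurd h1 ht
        · exact (isClosed_singleton (x := (0 : Λ))).preimage g.continuous
      have hg0 : g s = 0 := hsub h
      simp [hg0]
    · simp [(he s).2 h]
  have hann : ∀ g : C(S, Λ), g * f = 0 ↔ g ∈ Ideal.span {e} := by
    intro g
    rw [Ideal.mem_span_singleton]
    constructor
    · intro hg
      exact ⟨g, by rw [mul_comm]; exact key g hg⟩
    · rintro ⟨c, rfl⟩
      calc e * c * f = c * (e * f) := by ring
        _ = 0 := by rw [hef, mul_zero]
  have wd : ∀ a b : C(S, Λ), a * f = b * f → a * (1 - e) = b * (1 - e) := by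
    intro a b hab
    have h0 : (a - b) * f = 0 := by rw [sub_mul, hab, sub_self]
    have h1 := key _ h0
    have h2 : (a - b) * (1 - e) = 0 := by
      rw [mul_sub, mul_one, ← h1, sub_self]
    have h3 : a * (1 - e) - b * (1 - e) = 0 := by rw [← sub_mul]; exact h2
    exact sub_eq_zero.mp h3
  let pick : (Ideal.span {f} : Ideal C(S, Λ)) → C(S, Λ) := fun x =>
    Classical.choose (Ideal.mem_span_singleton'.mp x.2)
  have hpick : ∀ x, pick x * f = (x : C(S, Λ)) := fun x =>
    Classical.choose_spec (Ideal.mem_span_singleton'.mp x.2)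
  let σ : (Ideal.span {f} : Ideal C(S, Λ)) →ₗ[C(S, Λ)] C(S, Λ) :=
    { toFun := fun x => pick x * (1 - e)
      map_add' := fun x y => by
        have h : pick (x + y) * f = (pick x + pick y) * f := by
          rw [hpick, add_mul, hpick, hpick]; rfl
        show pick (x + y) * (1 - e) = pick x * (1 - e) + pick y * (1 - e)
        rw [wd _ _ h, add_mul]
      map_smul' := fun r x => by
        have h : pick (r • x) * f = (r * pick x) * f := by
          rw [hpick, mul_assoc, hpick]; rfl
        simp only [RingHom.id_apply]
        rw [wd _ _ h, smul_eq_mul, mul_assoc] }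
  have hσ : ∀ x : (Ideal.span {f} : Ideal C(S, Λ)), σ x * f = (x : C(S, Λ)) := by
    intro x
    have : pick x * (1 - e) * f = pick x * f - pick x * (e * f) := by ring
    show pick x * (1 - e) * f = _
    rw [this, hef, mul_zero, sub_zero, hpick]
  refine ⟨hann, ⟨σ, hσ⟩, ?_⟩
  let π : C(S, Λ) →ₗ[C(S, Λ)] (Ideal.span {f} : Ideal C(S, Λ)) :=
    { toFun := fun g => ⟨g * f, Ideal.mul_mem_left _ g (Ideal.mem_span_singleton_self f)⟩
      map_add' := fun a b => by ext; simp [add_mul]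
      map_smul' := fun r a => by ext; simp [mul_assoc] }
  exact Module.Projective.of_split σ π (by
    apply LinearMap.ext; intro x
    apply Subtype.ext
    simpa [π] using hσ x)
end

section
/- Let Λ be a commutative ring and let S be a profinite set. Then the ring of locally constant Λ-valued functions on S (equivalently, the ring C(S, Λ) of continuous functions when Λ carries the discrete topology) is a flat Λ-module. -/
/-- Let `Λ` be a commutative ring (with the discrete topology) and `S` a
profinite set. Then the ring `C(S, Λ)` of continuous (equivalently, locally constant) `Λ`-valued
functions on `S` is a flat `Λ`-module. -/
theorem stmt_6 (Λ : Type) [CommRing Λ] [TopologicalSpace Λ] [DiscreteTopology Λ]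
    (S : Type) [TopologicalSpace S] [CompactSpace S] [T2Space S] [TotallyDisconnectedSpace S] :
    Module.Flat Λ C(S, Λ) := by
  classical
  apply Module.Flat.of_forall_isTrivialRelation
  intro ι f x hfx
  set X : S → (Fin ι → Λ) := fun s i => x i s with hX
  have hXc : Continuous X := continuous_pi fun i => (x i).continuous
  have hfin : (Set.range X).Finite := (isCompact_range hXc).finite_of_discrete
  haveI : Fintype (Set.range X) := hfin.fintype
  have key : ∃ (κ : Type) (_ : Fintype κ) (a : Fin ι → κ → Λ) (y : κ → C(S, Λ)),
      (∀ i, x i = ∑ j, a i j • y j) ∧ ∀ j, ∑ i, f i * a i j = 0 := by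
   refine ⟨Set.range X, inferInstance, fun i v => (v : Fin ι → Λ) i,
     fun v => ⟨fun s => if X s = (v : Fin ι → Λ) then 1 else 0, ?_⟩, ?_, ?_⟩
   · exact (continuous_of_discreteTopology
       (f := fun w : Fin ι → Λ => if w = (v : Fin ι → Λ) then (1 : Λ) else 0)).comp hXc
   · intro i
     ext s
     rw [ContinuousMap.sum_apply]
     simp only [ContinuousMap.smul_apply, ContinuousMap.coe_mk, smul_eq_mul, mul_ite, mul_one,
       mul_zero]
     have hcond : ∀ v : Set.range X,
         (X s = (v : Fin ι → Λ)) = ((⟨X s, Set.mem_range_self s⟩ : Set.range X) = v) := fun v => by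
       simp [Subtype.ext_iff]
     simp only [hcond, Finset.sum_ite_eq, Finset.mem_univ, if_true]
     rfl
   · intro v
     obtain ⟨s, hs⟩ := v.2
     have h := congrArg (fun g : C(S, Λ) => g s) hfx
     simp only [ContinuousMap.coe_sum, Finset.sum_apply, ContinuousMap.coe_smul, Pi.smul_apply,
       smul_eq_mul, ContinuousMap.zero_apply] at h
     simpa [← hs] using h

  obtain ⟨κ, _, a, y, h1, h2⟩ := key
  exact ⟨Fintype.card κ, fun i j => a i ((Fintype.equivFin κ).symm j),
    fun j => y ((Fintype.equivFin κ).symm j),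
    fun i => by rw [h1 i]; exact ((Fintype.equivFin κ).symm.sum_comp (fun v => a i v • y v)).symm,
    fun j => h2 _⟩
end

section
/- Let Λ be a commutative T1 topological ring whose underlying ring is semi-hereditary, and let S be a profinite set. Then the ring C(S, Λ) of continuous Λ-valued functions on S is a flat Λ-module (via the inclusion of Λ as constant functions). -/
open TensorProduct LinearMap

/-- Evaluation at a point as a `Λ`-linear map `C(S,Λ) →ₗ[Λ] Λ`. -/
private def evalₗ (Λ : Type) [CommRing Λ] [TopologicalSpace Λ] [IsTopologicalRing Λ]
    (S : Type) [TopologicalSpace S] (t : S) : C(S, Λ) →ₗ[Λ] Λ where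
  toFun f := f t
  map_add' f g := rfl
  map_smul' c f := rfl

/-- Let `Λ` be a commutative T1 topological ring whose underlying ring is
semi-hereditary (every finitely generated ideal is projective), and let `S` be a profinite set.
Then the ring `C(S, Λ)` of continuous `Λ`-valued functions on `S` is a flat `Λ`-module (via the
inclusion of `Λ` as constant functions). -/
theorem stmt_7 (Λ : Type) [CommRing Λ] [TopologicalSpace Λ] [IsTopologicalRing Λ] [T1Space Λ]
    (hsh : ∀ I : Ideal Λ, I.FG → Module.Projective Λ I)
    (S : Type) [TopologicalSpace S] [CompactSpace S] [T2Space S] [TotallyDisconnectedSpace S] :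
    Module.Flat Λ C(S, Λ) := by
  set M := C(S, Λ)
  rw [Module.Flat.iff_lTensor_injective]
  intro I hI
  haveI : Module.Projective Λ I := hsh I hI
  haveI : Module.Finite Λ I := Module.Finite.iff_fg.mpr hI
  obtain ⟨n, π, hπ⟩ := Module.Finite.exists_fin' Λ I
  obtain ⟨s, hs⟩ := Module.projective_lifting_property π (LinearMap.id) hπ
  -- the evaluation map μ N t : M ⊗ N →ₗ N, m ⊗ a ↦ m t • a
  let μ : ∀ (N : Type) [AddCommGroup N] [Module Λ N], S → (M ⊗[Λ] N →ₗ[Λ] N) :=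
    fun N _ _ t => TensorProduct.lift ((LinearMap.lsmul Λ N).comp (evalₗ Λ S t))
  have μnat : ∀ (N N' : Type) [AddCommGroup N] [Module Λ N] [AddCommGroup N'] [Module Λ N']
      (g : N →ₗ[Λ] N') (t : S), (g.comp (μ N t)) = (μ N' t).comp (lTensor M g) := by
    intro N N' _ _ _ _ g t
    apply TensorProduct.ext'
    intro m a
    simp [μ, evalₗ]
  intro x y hxy
  suffices h : ∀ z : M ⊗[Λ] I, lTensor M I.subtype z = 0 → z = 0 by
    exact sub_eq_zero.mp (h (x - y) (by rw [map_sub, hxy, sub_self]))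
  intro z hz
  -- Step 1: for each t, μ I t z = 0
  have h1 : ∀ t : S, μ I t z = 0 := by
    intro t
    apply Subtype.ext
    have := congrArg (fun w => w) (LinearMap.congr_fun (μnat I Λ I.subtype t) z)
    calc (μ I t z : Λ) = I.subtype (μ I t z) := rfl
      _ = μ Λ t (lTensor M I.subtype z) := this
      _ = 0 := by rw [hz, map_zero]
  -- Step 2: the image under the section vanishes under each μ
  set w : M ⊗[Λ] (Fin n → Λ) := lTensor M s z with hw
  have h2 : ∀ t : S, μ (Fin n → Λ) t w = 0 := by
    intro t
    have := LinearMap.congr_fun (μnat I (Fin n → Λ) s t) z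
    simp only [LinearMap.comp_apply] at this
    rw [hw, ← this, h1 t, map_zero]
  -- Step 3: w = 0 via the iso M ⊗ Λⁿ ≃ Mⁿ
  have h3 : w = 0 := by
    have key : ∀ (k : Fin n) (t : S), (TensorProduct.piScalarRight Λ Λ M (Fin n) w) k t = 0 := by
      intro k t
      have hmap : ((evalₗ Λ S t).comp ((LinearMap.proj k).comp
          (TensorProduct.piScalarRight Λ Λ M (Fin n)).toLinearMap))
          = (LinearMap.proj k).comp (μ (Fin n → Λ) t) := by
        apply TensorProduct.ext'
        intro m f
        simp only [μ, evalₗ, LinearMap.comp_apply, LinearEquiv.coe_coe, LinearMap.proj_apply,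
          TensorProduct.lift.tmul, LinearMap.coe_mk, AddHom.coe_mk, LinearMap.lsmul_apply,
          TensorProduct.piScalarRight_apply, TensorProduct.piScalarRightHom_tmul, Pi.smul_apply,
          smul_eq_mul]
        show (f k • m) t = m t * f k
        rw [ContinuousMap.smul_apply, smul_eq_mul, mul_comm]
      have := LinearMap.congr_fun hmap w
      simp only [LinearMap.comp_apply, LinearEquiv.coe_coe, LinearMap.proj_apply] at this
      rw [evalₗ] at this
      simpa [h2 t] using this
    have : (TensorProduct.piScalarRight Λ Λ M (Fin n)) w = 0 := by
      funext k
      exact ContinuousMap.ext (key k)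
    exact (map_eq_zero_iff _ (TensorProduct.piScalarRight Λ Λ M (Fin n)).injective).mp this
  -- Step 4: z = (lTensor M π) w = 0
  have h4 : (lTensor M π).comp (lTensor M s) = LinearMap.id := by
    rw [← lTensor_comp, hs, lTensor_id]
  calc z = ((lTensor M π).comp (lTensor M s)) z := by rw [h4]; rfl
    _ = lTensor M π w := rfl
    _ = 0 := by rw [h3, map_zero]
end

section
/- Let Λ be a regular coherent commutative ring and let T ⊆ Λ be a multiplicatively closed subset. Then the localization T⁻¹Λ is regular coherent. -/
open CategoryTheory in
/-- A module `M` over a commutative ring `R` has finite projective dimension if it admits a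
projective resolution which vanishes in all sufficiently large degrees. -/
def HasFiniteProjectiveDimension (R : Type) [CommRing R] (M : Type) [AddCommGroup M]
    [Module R M] : Prop :=
  ∃ (n : ℕ) (P : ProjectiveResolution (ModuleCat.of R M)),
    ∀ i : ℕ, n < i → Limits.IsZero (P.complex.X i)

/-- A commutative ring is regular coherent if every finitely generated ideal is finitely
presented and has finite projective dimension. -/
def IsRegularCoherentRing (R : Type) [CommRing R] : Prop :=
  (∀ I : Ideal R, I.FG → Module.FinitePresentation R I) ∧
  (∀ I : Ideal R, I.FG → HasFiniteProjectiveDimension R I)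


open CategoryTheory Limits

section aux
variable {Λ : Type} [CommRing Λ] (T : Submonoid Λ)

lemma aux_exists_fg (J : Ideal (Localization T)) (hJ : J.FG) :
    ∃ I : Ideal Λ, I.FG ∧ I.map (algebraMap Λ (Localization T)) = J := by
  classical
  obtain ⟨s, hs⟩ := hJ
  set f := algebraMap Λ (Localization T)
  refine ⟨Ideal.span ((fun x => (IsLocalization.sec T x).1) '' (s : Set (Localization T))), ?_, ?_⟩
  · exact Submodule.fg_def.2 ⟨_, (s.finite_toSet.image _), rfl⟩
  · rw [Ideal.map_span, ← hs]
    apply le_antisymm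
    · rw [Ideal.span_le]
      rintro - ⟨-, ⟨x, hx, rfl⟩, rfl⟩
      have hx' : x ∈ Ideal.span (s : Set (Localization T)) := Ideal.subset_span hx
      have := IsLocalization.sec_spec (M := T) (S := Localization T) x
      rw [← this]
      exact Ideal.mul_mem_right _ _ hx'
    · rw [Ideal.span_le]
      intro x hx
      have hsec := IsLocalization.sec_spec (M := T) (S := Localization T) x
      have hu : IsUnit (f ((IsLocalization.sec T x).2 : Λ)) :=
        IsLocalization.map_units (Localization T) (IsLocalization.sec T x).2
      obtain ⟨u, hu'⟩ := hu
      have hfx : f (IsLocalization.sec T x).1 ∈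
          Ideal.span (f '' ((fun x => (IsLocalization.sec T x).1) '' (s : Set (Localization T)))) :=
        Ideal.subset_span ⟨_, ⟨x, hx, rfl⟩, rfl⟩
      have : x = f (IsLocalization.sec T x).1 * (↑u⁻¹ : (Localization T)ˣ) := by
        rw [← hsec, ← hu', mul_assoc, u.mul_inv, mul_one]
      rw [this]
      exact Ideal.mul_mem_right _ _ hfx

noncomputable def auxEquiv (I : Ideal Λ) :
    LocalizedModule T I ≃ₗ[Localization T] (I.map (algebraMap Λ (Localization T))) := by
  have e₀ := IsLocalizedModule.iso T (Algebra.idealMap I (S := Localization T))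
  exact LinearEquiv.ofBijective
    (LinearMap.extendScalarsOfIsLocalization T (Localization T) e₀.toLinearMap)
    e₀.bijective

end aux
section aux2

variable {Λ : Type} [CommRing Λ] (T : Submonoid Λ)
variable {M N : Type} [AddCommGroup M] [AddCommGroup N] [Module Λ M] [Module Λ N]

lemma locmap_coe (g : M →ₗ[Λ] N) :
    ⇑(LocalizedModule.map T g) =
      ⇑(IsLocalizedModule.map T (LocalizedModule.mkLinearMap T M)
        (LocalizedModule.mkLinearMap T N) g) := by
  funext x
  induction x using LocalizedModule.induction_on with
  | h m s =>
    rw [LocalizedModule.map_mk, IsLocalizedModule.map_LocalizedModules]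

variable {M₂ : Type} [AddCommGroup M₂] [Module Λ M₂]

lemma locmap_exact (g : M →ₗ[Λ] N) (h : N →ₗ[Λ] M₂) (ex : Function.Exact g h) :
    Function.Exact (LocalizedModule.map T g) (LocalizedModule.map T h) := by
  rw [show ⇑(LocalizedModule.map T g) = _ from locmap_coe T g,
    show ⇑(LocalizedModule.map T h) = _ from locmap_coe T h]
  exact IsLocalizedModule.map_exact T _ _ _ g h ex

lemma locmap_surjective (g : M →ₗ[Λ] N) (hg : Function.Surjective g) :
    Function.Surjective (LocalizedModule.map T g) := by
  rw [show ⇑(LocalizedModule.map T g) = _ from locmap_coe T g]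
  exact IsLocalizedModule.map_surjective T _ _ g hg

instance aux_subsingleton [Subsingleton M] : Subsingleton (LocalizedModule T M) := by
  constructor
  intro a b
  induction a using LocalizedModule.induction_on with
  | h m s =>
    induction b using LocalizedModule.induction_on with
    | h m' s' =>
      rw [Subsingleton.elim m m', LocalizedModule.mk_eq]
      exact ⟨1, Subsingleton.elim _ _⟩

end aux2

section res

variable {Λ : Type} [CommRing Λ] (T : Submonoid Λ)
variable (I : Ideal Λ) (P : ProjectiveResolution (ModuleCat.of Λ ↥I))


noncomputable def locComplex : ChainComplex (ModuleCat (Localization T)) ℕ :=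
  ChainComplex.of
    (fun i => ModuleCat.of (Localization T) (LocalizedModule T (P.complex.X i)))
    (fun i => ModuleCat.ofHom (LocalizedModule.map T (P.complex.d (i+1) i).hom))
    (fun i => by
      apply ModuleCat.hom_ext
      apply LinearMap.ext
      intro x
      induction x using LocalizedModule.induction_on with
      | h m s =>
        have h0 : (P.complex.d (i+1) i).hom ((P.complex.d (i+1+1) (i+1)).hom m) = 0 := by
          have h := P.complex.d_comp_d (i+1+1) (i+1) i
          calc (P.complex.d (i+1) i).hom ((P.complex.d (i+1+1) (i+1)).hom m)
              = (P.complex.d (i+1+1) (i+1) ≫ P.complex.d (i+1) i).hom m := rfl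
            _ = 0 := by rw [h]; rfl
        show LocalizedModule.map T (P.complex.d (i+1) i).hom
            (LocalizedModule.map T (P.complex.d (i+1+1) (i+1)).hom (.mk m s)) = 0
        rw [LocalizedModule.map_mk, LocalizedModule.map_mk, h0, LocalizedModule.zero_mk])

@[simp] lemma locComplex_X (i : ℕ) :
    (locComplex T I P).X i = ModuleCat.of (Localization T) (LocalizedModule T (P.complex.X i)) :=
  rfl

lemma locComplex_d (i : ℕ) :
    (locComplex T I P).d (i+1) i =
      ModuleCat.ofHom (LocalizedModule.map T (P.complex.d (i+1) i).hom) := by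
  simp [locComplex]


noncomputable def locPi0 :
    (locComplex T I P).X 0 ⟶
      ModuleCat.of (Localization T) ↥(I.map (algebraMap Λ (Localization T))) :=
  ModuleCat.ofHom ((auxEquiv T I).toLinearMap ∘ₗ
    LocalizedModule.map T ((P.π.f 0).hom : ↑(P.complex.X 0) →ₗ[Λ] ↥I))

lemma locPi0_comm : (locComplex T I P).d 1 0 ≫ locPi0 T I P = 0 := by
  apply ModuleCat.hom_ext
  apply LinearMap.ext
  intro x
  induction x using LocalizedModule.induction_on with
  | h m s =>
    have h0 : ((P.π.f 0).hom : ↑(P.complex.X 0) →ₗ[Λ] ↥I) ((P.complex.d 1 0).hom m) = 0 := by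
      have h := P.complex_d_comp_π_f_zero
      calc (P.π.f 0).hom ((P.complex.d 1 0).hom m) = (P.complex.d 1 0 ≫ P.π.f 0).hom m := rfl
        _ = 0 := by rw [h]; rfl
    show (auxEquiv T I).toLinearMap
        (LocalizedModule.map T ((P.π.f 0).hom : ↑(P.complex.X 0) →ₗ[Λ] ↥I)
          (LocalizedModule.map T (P.complex.d 1 0).hom (.mk m s))) = 0
    rw [LocalizedModule.map_mk, LocalizedModule.map_mk, h0, LocalizedModule.zero_mk]
    exact (auxEquiv T I).map_zero

noncomputable def locRes :
    ProjectiveResolution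
      (ModuleCat.of (Localization T) ↥(I.map (algebraMap Λ (Localization T)))) where
  complex := locComplex T I P
  projective n := by
    have h1 : Module.Projective Λ (P.complex.X n) :=
      (IsProjective.iff_projective _).mpr (P.projective n)
    have h2 : Module.Projective (Localization T) (LocalizedModule T (P.complex.X n)) :=
      Module.projective_of_isLocalizedModule T (LocalizedModule.mkLinearMap T _)
    exact (IsProjective.iff_projective _).mp h2
  π := (ChainComplex.toSingle₀Equiv _ _).symm ⟨locPi0 T I P, locPi0_comm T I P⟩
  quasiIso := by
    have hsurj : Function.Surjective ((P.π.f 0).hom : ↑(P.complex.X 0) →ₗ[Λ] ↥I) :=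
      (ModuleCat.epi_iff_surjective (P.π.f 0)).mp inferInstance
    have hex0 : Function.Exact ((P.complex.d 1 0).hom : ↑(P.complex.X 1) →ₗ[Λ] ↑(P.complex.X 0))
        ((P.π.f 0).hom : ↑(P.complex.X 0) →ₗ[Λ] ↥I) := by
      have hexact : (ShortComplex.mk (P.complex.d 1 0) (P.π.f 0)
          P.complex_d_comp_π_f_zero).Exact :=
        ShortComplex.exact_of_g_is_cokernel _ P.isColimitCokernelCofork
      exact (ShortComplex.ShortExact.moduleCat_exact_iff_function_exact _).mp hexact
    refine ⟨fun n => ?_⟩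
    cases n with
    | zero =>
      rw [ChainComplex.quasiIsoAt₀_iff, ShortComplex.quasiIso_iff_of_zeros']
      · dsimp
        refine (ShortComplex.exact_and_epi_g_iff_of_iso
          (ShortComplex.isoMk (Iso.refl _) (Iso.refl _) (Iso.refl _)
            (by exact (Category.id_comp _).trans (Category.comp_id _).symm)
            (by exact (Category.id_comp _).trans (Category.comp_id _).symm) :
            _ ≅ ShortComplex.mk ((locComplex T I P).d 1 0) (locPi0 T I P)
              (locPi0_comm T I P))).2 ⟨?_, ?_⟩
        · rw [ShortComplex.ShortExact.moduleCat_exact_iff_function_exact]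
          dsimp
          have h2 := locmap_exact T _ _ hex0
          have h3 := h2.comp_injective (g' := ⇑(auxEquiv T I))
            (auxEquiv T I).injective (map_zero _)
          show Function.Exact ⇑(LocalizedModule.map T (P.complex.d 1 0).hom)
            ⇑((auxEquiv T I).toLinearMap ∘ₗ
              LocalizedModule.map T ((P.π.f 0).hom : ↑(P.complex.X 0) →ₗ[Λ] ↥I))
          rw [LinearMap.coe_comp]
          exact h3
        · rw [ModuleCat.epi_iff_surjective]
          show Function.Surjective ⇑((auxEquiv T I).toLinearMap ∘ₗ
              LocalizedModule.map T ((P.π.f 0).hom : ↑(P.complex.X 0) →ₗ[Λ] ↥I))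
          rw [LinearMap.coe_comp]
          exact (auxEquiv T I).surjective.comp (locmap_surjective T _ hsurj)
      · exact (locComplex T I P).shape 0 0 (by simp)
      · simp; rfl
      · simp; rfl
    | succ n =>
      rw [quasiIsoAt_iff_exactAt' _ _ (ChainComplex.exactAt_succ_single_obj _ _)]
      rw [HomologicalComplex.exactAt_iff' _ (n+1+1) (n+1) n (by simp) (by simp)]
      have hbase : (ShortComplex.mk (P.complex.d (n+1+1) (n+1)) (P.complex.d (n+1) n)
          (P.complex.d_comp_d _ _ _)).Exact := P.exact_succ n
      have hfun := (ShortComplex.ShortExact.moduleCat_exact_iff_function_exact _).mp hbase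
      have h2 := locmap_exact T _ _ hfun
      rw [ShortComplex.ShortExact.moduleCat_exact_iff_function_exact]
      dsimp [HomologicalComplex.sc', HomologicalComplex.shortComplexFunctor']
      rw [locComplex_d, locComplex_d]
      exact h2
end res

section final
variable {Λ : Type} [CommRing Λ] (T : Submonoid Λ)

lemma subsingleton_of_isZero {R : Type} [CommRing R] {M : ModuleCat R} (h : Limits.IsZero M) :
    Subsingleton M := by
  have hid : 𝟙 M = 0 := h.eq_of_src _ _
  refine subsingleton_of_forall_eq 0 fun x => ?_
  calc x = (𝟙 M : M ⟶ M).hom x := rfl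
    _ = (0 : M ⟶ M).hom x := by rw [hid]
    _ = 0 := rfl

theorem stmt_10' (h : IsRegularCoherentRing Λ) :
    IsRegularCoherentRing (Localization T) := by
  constructor
  · intro J hJ
    obtain ⟨I, hIfg, rfl⟩ := aux_exists_fg T J hJ
    have h1 : Module.FinitePresentation Λ I := h.1 I hIfg
    have h2 : Module.FinitePresentation (Localization T) (LocalizedModule T I) := inferInstance
    exact Module.finitePresentation_of_surjective (auxEquiv T I).toLinearMap
      (auxEquiv T I).surjective
      (by rw [LinearEquiv.ker]; exact Submodule.fg_bot)
  · intro J hJ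
    obtain ⟨I, hIfg, rfl⟩ := aux_exists_fg T J hJ
    obtain ⟨n, P, hP⟩ := h.2 I hIfg
    refine ⟨n, locRes T I P, fun i hi => ?_⟩
    have : Subsingleton ↑(P.complex.X i) := subsingleton_of_isZero (hP i hi)
    show Limits.IsZero (ModuleCat.of (Localization T) (LocalizedModule T (P.complex.X i)))
    exact @ModuleCat.isZero_of_subsingleton _ _ _
      (inferInstanceAs (Subsingleton (LocalizedModule T ↑(P.complex.X i))))

end final

/-- A localization of a regular coherent commutative ring at a multiplicatively
closed subset is regular coherent. -/
theorem stmt_10 (Λ : Type) [CommRing Λ] (T : Submonoid Λ)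
    (h : IsRegularCoherentRing Λ) :
    IsRegularCoherentRing (Localization T) := by
  exact stmt_10' T h
end

section
/- Let Λ be the colimit of a filtered system of commutative rings Λ_i with flat transition maps. If each Λ_i is regular coherent, then Λ is regular coherent. -/
open CategoryTheory TensorProduct

set_option linter.unusedSectionVars false

private lemma exact_inj_comp {α β γ δ : Type*} [Zero γ] [Zero δ] {f : α → β} {g : β → γ}
    {e : γ → δ} (he : Function.Injective e) (h0 : e 0 = 0) (h : Function.Exact f g) :
    Function.Exact f (e ∘ g) := by
  intro y
  rw [Function.comp_apply]
  constructor
  · intro hy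
    exact (h y).1 (he (by rw [hy, h0]))
  · intro hy
    rw [(h y).2 hy, h0]

section BC

variable {R S : Type} [CommRing R] [CommRing S] [Algebra R S] [Module.Flat R S]

/-- The natural map `S ⊗[R] J → S` for an ideal `J` of `R`. -/
noncomputable def idealBCmap (J : Ideal R) : S ⊗[R] J →ₗ[S] S :=
  (TensorProduct.AlgebraTensorModule.rid R S S).toLinearMap ∘ₗ (LinearMap.baseChange S J.subtype)

private lemma idealBCmap_tmul (J : Ideal R) (s : S) (x : J) :
    idealBCmap (S := S) J (s ⊗ₜ x) = algebraMap R S (x : R) * s := by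
  simp [idealBCmap, Algebra.smul_def]

private lemma idealBCmap_injective (J : Ideal R) :
    Function.Injective (idealBCmap (S := S) J) := by
  have h1 : Function.Injective (LinearMap.baseChange S J.subtype) := by
    rw [show ⇑(LinearMap.baseChange S J.subtype) = ⇑(LinearMap.lTensor S J.subtype) from
      LinearMap.baseChange_eq_ltensor _]
    exact Module.Flat.lTensor_preserves_injective_linearMap _ J.injective_subtype
  simpa [idealBCmap] using (TensorProduct.AlgebraTensorModule.rid R S S).injective.comp h1

private lemma idealBCmap_range (J : Ideal R) :
    LinearMap.range (idealBCmap (S := S) J) = J.map (algebraMap R S) := by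
  apply le_antisymm
  · rintro _ ⟨z, rfl⟩
    induction z with
    | zero => simp
    | tmul s x =>
      rw [idealBCmap_tmul]
      exact Ideal.mul_mem_right _ _ (Ideal.mem_map_of_mem _ x.2)
    | add a b ha hb => rw [map_add]; exact add_mem ha hb
  · rw [Ideal.map_le_iff_le_comap]
    intro x hx
    exact ⟨(1 : S) ⊗ₜ ⟨x, hx⟩, by simp [idealBCmap_tmul]⟩

/-- For flat `R → S` and an ideal `J` of `R`, `S ⊗[R] J` is isomorphic to the ideal of `S`
generated by the image of `J`. -/
noncomputable def idealBCequiv (J : Ideal R) : (S ⊗[R] J) ≃ₗ[S] (J.map (algebraMap R S)) :=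
  (LinearEquiv.ofInjective _ (idealBCmap_injective (S := S) J)).trans
    (LinearEquiv.ofEq _ _ (idealBCmap_range J))

/-- Finite presentation transfers along flat base change of a finitely presented ideal. -/
theorem fp_of_map (J : Ideal R) (hJ : Module.FinitePresentation R J) :
    Module.FinitePresentation S (J.map (algebraMap R S)) := by
  haveI := hJ
  refine Module.finitePresentation_of_surjective (idealBCequiv (S := S) J).toLinearMap
    (idealBCequiv (S := S) J).surjective ?_
  rw [LinearEquiv.ker]
  exact Submodule.fg_bot

open ShortComplex.ShortExact in
/-- Finite projective dimension transfers along flat base change of ideals. -/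
theorem hfpd_of_map (J : Ideal R) (h : HasFiniteProjectiveDimension R J) :
    HasFiniteProjectiveDimension S (J.map (algebraMap R S)) := by
  classical
  obtain ⟨n, P, hv⟩ := h
  set C := P.complex with hCdef
  -- the base-changed complex
  set QX : ℕ → ModuleCat S := fun k => ModuleCat.of S (S ⊗[R] C.X k) with hQX
  set Qd : ∀ k : ℕ, QX (k+1) ⟶ QX k :=
    fun k => ModuleCat.ofHom (((C.d (k+1) k).hom : C.X (k+1) →ₗ[R] C.X k).baseChange S) with hQd
  have hQdd : ∀ k : ℕ, Qd (k+1) ≫ Qd k = 0 := by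
    intro k
    apply ModuleCat.hom_ext
    show (((C.d (k+1) k).hom : C.X (k+1) →ₗ[R] C.X k).baseChange S).comp
      (((C.d (k+2) (k+1)).hom : _ →ₗ[R] _).baseChange S) = 0
    rw [← LinearMap.baseChange_comp]
    have hdd : ((C.d (k+1) k).hom : C.X (k+1) →ₗ[R] C.X k).comp ((C.d (k+2) (k+1)).hom : _ →ₗ[R] _) = 0 :=
      congrArg ModuleCat.Hom.hom (C.d_comp_d (k+2) (k+1) k)
    rw [hdd, LinearMap.baseChange_zero]
  set Q : ChainComplex (ModuleCat S) ℕ := ChainComplex.of QX Qd hQdd with hQ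
  -- the augmentation over R
  set εJ : C.X 0 →ₗ[R] (ModuleCat.of R ↥J) := (P.π.f 0).hom with hεJ
  have hεsurj : Function.Surjective εJ := by
    rw [hεJ]
    exact (ModuleCat.epi_iff_surjective (P.π.f 0)).1 inferInstance
  have hexJ : Function.Exact ((C.d 1 0).hom : C.X 1 →ₗ[R] C.X 0) εJ := by
    have hS : (ShortComplex.mk (C.d 1 0) (P.π.f 0) P.complex_d_comp_π_f_zero).Exact :=
      ShortComplex.exact_of_g_is_cokernel _ P.isColimitCokernelCofork
    exact (moduleCat_exact_iff_function_exact _).1 hS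
  have hexk : ∀ k : ℕ, Function.Exact ((C.d (k+2) (k+1)).hom : C.X (k+2) →ₗ[R] C.X (k+1))
      ((C.d (k+1) k).hom : C.X (k+1) →ₗ[R] C.X k) := by
    intro k
    exact (moduleCat_exact_iff_function_exact _).1 (P.exact_succ k)
  -- base-changed exactness
  have hexk' : ∀ k : ℕ, Function.Exact
      (((C.d (k+2) (k+1)).hom : C.X (k+2) →ₗ[R] C.X (k+1)).baseChange S)
      (((C.d (k+1) k).hom : C.X (k+1) →ₗ[R] C.X k).baseChange S) := by
    intro k
    simpa only [LinearMap.baseChange_eq_ltensor] using Module.Flat.lTensor_exact S (hexk k)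
  set e := idealBCequiv (S := S) J with he
  set ε' : (S ⊗[R] C.X 0) →ₗ[S] ↥(J.map (algebraMap R S)) :=
    e.toLinearMap ∘ₗ (εJ.baseChange S) with hε'
  have hε'surj : Function.Surjective ε' := by
    rw [hε', LinearMap.coe_comp]
    refine Function.Surjective.comp e.surjective ?_
    exact LinearMap.lTensor_surjective S hεsurj
  have hex0' : Function.Exact (((C.d 1 0).hom : C.X 1 →ₗ[R] C.X 0).baseChange S) ε' := by
    have h1 : Function.Exact (((C.d 1 0).hom : C.X 1 →ₗ[R] C.X 0).baseChange S) (εJ.baseChange S) := by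
      simpa only [LinearMap.baseChange_eq_ltensor] using Module.Flat.lTensor_exact S hexJ
    rw [hε', LinearMap.coe_comp]
    exact exact_inj_comp e.injective (map_zero _) h1
  have hε'd : ε'.comp (((C.d 1 0).hom : C.X 1 →ₗ[R] C.X 0).baseChange S) = 0 := by
    have hJd : εJ.comp ((C.d 1 0).hom : C.X 1 →ₗ[R] C.X 0) = 0 := congrArg ModuleCat.Hom.hom P.complex_d_comp_π_f_zero
    rw [hε', LinearMap.comp_assoc, ← LinearMap.baseChange_comp, hJd, LinearMap.baseChange_zero,
      LinearMap.comp_zero]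
  -- projectivity
  have hproj : ∀ k : ℕ, Projective (Q.X k) := by
    intro k
    haveI h1 : Module.Projective R (C.X k) :=
      (IsProjective.iff_projective (R := R) (P := C.X k)).2 (P.projective k)
    exact (IsProjective.iff_projective (R := S) (P := S ⊗[R] C.X k)).1 inferInstance
  -- the morphism to the single complex
  set ε'' : Q.X 0 ⟶ ModuleCat.of S ↥(J.map (algebraMap R S)) := ModuleCat.ofHom ε' with hε''
  have hπd : Q.d 1 0 ≫ ε'' = 0 := by
    have : Q.d 1 0 = Qd 0 := ChainComplex.of_d QX Qd 0
    rw [this]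
    exact ModuleCat.hom_ext hε'd
  set π : Q ⟶ (ChainComplex.single₀ (ModuleCat S)).obj (ModuleCat.of S ↥(J.map (algebraMap R S))) :=
    (ChainComplex.toSingle₀Equiv Q (ModuleCat.of S ↥(J.map (algebraMap R S)))).symm
      ⟨ε'', hπd⟩ with hπ
  have hπ0 : π.f 0 = ε'' := by
    rw [hπ]
    exact ChainComplex.toSingle₀Equiv_symm_apply_f_zero _ _
  have hquasi : QuasiIso π := by
    refine ⟨fun k => ?_⟩
    cases k with
    | zero =>
      rw [ChainComplex.quasiIsoAt₀_iff, ShortComplex.quasiIso_iff_of_zeros']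
      rotate_left
      · exact Q.shape 0 0 (by simp)
      · simp; rfl
      · simp; rfl
      constructor
      · rw [moduleCat_exact_iff_function_exact]
        have h1 : Q.d 1 0 = Qd 0 := ChainComplex.of_d QX Qd 0
        dsimp [HomologicalComplex.shortComplexFunctor']
        rw [h1, hπ0]
        exact hex0'
      · dsimp [HomologicalComplex.shortComplexFunctor']
        rw [hπ0]
        exact (ModuleCat.epi_iff_surjective _).2 hε'surj
    | succ k =>
      rw [quasiIsoAt_iff_exactAt' π (k+1) (ChainComplex.exactAt_succ_single_obj _ _)]
      rw [HomologicalComplex.exactAt_iff' _ (k+2) (k+1) k (by simp) (by simp)]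
      rw [moduleCat_exact_iff_function_exact]
      dsimp [HomologicalComplex.sc', HomologicalComplex.shortComplexFunctor']
      have h1 : Q.d (k+2) (k+1) = Qd (k+1) := ChainComplex.of_d QX Qd (k+1)
      have h2 : Q.d (k+1) k = Qd k := ChainComplex.of_d QX Qd k
      rw [h1, h2]
      exact hexk' k
  refine ⟨n, { complex := Q, projective := hproj, π := π, quasiIso := hquasi }, ?_⟩
  intro i hi
  show Limits.IsZero (Q.X i)
  have hz := hv i hi
  have hzero : ∀ x : C.X i, x = 0 := by
    intro x
    have h01 : (𝟙 (C.X i) : C.X i ⟶ C.X i) = 0 := hz.eq_of_src _ _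
    calc x = (𝟙 (C.X i) : C.X i ⟶ C.X i) x := rfl
    _ = (0 : C.X i ⟶ C.X i) x := by rw [h01]
    _ = 0 := rfl
  have hsub : Subsingleton (S ⊗[R] C.X i) := by
    constructor
    have hzz : ∀ z : S ⊗[R] C.X i, z = 0 := by
      intro z
      induction z with
      | zero => rfl
      | tmul s x => rw [hzero x, tmul_zero]
      | add a b ha hb => rw [ha, hb, add_zero]
    intro a b
    rw [hzz a, hzz b]
  exact @ModuleCat.isZero_of_subsingleton S _ (ModuleCat.of S (S ⊗[R] ↑(C.X i))) hsub

end BC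

section DirectLimit

variable (ι : Type) [Preorder ι] [IsDirected ι (· ≤ ·)] [Nonempty ι]
    (G : ι → Type) [∀ i, CommRing (G i)]
    (f : ∀ i j, i ≤ j → G i →+* G j)
    [DirectedSystem G (fun i j h => f i j h)]
    (hflat : ∀ (i j : ι) (h : i ≤ j), (f i j h).Flat)

include hflat in
/-- A filtered colimit of rings along flat transition maps is flat over each of its stages. -/
theorem directLimit_flat (i₀ : ι) :
    letI := (Ring.DirectLimit.of G (fun i j h => f i j h) i₀).toAlgebra
    Module.Flat (G i₀) (Ring.DirectLimit G (fun i j h => f i j h)) := by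
  letI := (Ring.DirectLimit.of G (fun i j h => f i j h) i₀).toAlgebra
  classical
  apply Module.Flat.of_forall_isTrivialRelation
  intro κ c x hsum
  -- lift the x's to a common stage j with i₀ ≤ j
  have hx : ∀ k : Fin κ, ∃ j y, Ring.DirectLimit.of G (fun i j h => f i j h) j y = x k := fun k =>
    Ring.DirectLimit.exists_of (x k)
  choose idx elt helt using hx
  obtain ⟨j₁, hj₁⟩ := (Finset.univ.image idx).exists_le
  obtain ⟨j, hij, hj₁j⟩ := directed_of (· ≤ ·) i₀ j₁
  have hidx : ∀ k, idx k ≤ j := fun k =>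
    le_trans (hj₁ (idx k) (Finset.mem_image_of_mem idx (Finset.mem_univ k))) hj₁j
  set z : Fin κ → G j := fun k => f (idx k) j (hidx k) (elt k) with hz
  have hxz : ∀ k, Ring.DirectLimit.of G (fun i j h => f i j h) j (z k) = x k := fun k => by
    rw [hz]; rw [Ring.DirectLimit.of_f]; exact helt k
  -- the relation holds at stage j after mapping into the limit
  have hrel : Ring.DirectLimit.of G (fun i j h => f i j h) j
      (∑ k, f i₀ j hij (c k) * z k) = 0 := by
    rw [map_sum]
    rw [show (0 : Ring.DirectLimit G (fun i j h => f i j h)) = ∑ k, c k • x k from hsum.symm]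
    refine Finset.sum_congr rfl fun k _ => ?_
    rw [map_mul, Ring.DirectLimit.of_f, Algebra.smul_def, ← hxz k]
    rfl
  obtain ⟨m, hjm, hm⟩ := Ring.DirectLimit.of.zero_exact hrel
  rw [map_sum] at hm
  have him : i₀ ≤ m := le_trans hij hjm
  letI : Algebra (G i₀) (G m) := (f i₀ m him).toAlgebra
  haveI : Module.Flat (G i₀) (G m) := hflat i₀ m him
  set w : Fin κ → G m := fun k => f j m hjm (z k) with hw
  obtain ⟨κ', a, y, hy1, hy2⟩ :=
    Module.Flat.isTrivialRelation_of_sum_smul_eq_zero (R := G i₀) (M := G m) (f := c) (x := w)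
      (by
        rw [← hm]
        refine Finset.sum_congr rfl fun k _ => ?_
        rw [Algebra.smul_def, map_mul,
          show (f j m hjm) ((f i₀ j hij) (c k)) = (f i₀ m him) (c k) from
            DirectedSystem.map_map (f := fun i j h => ⇑(f i j h)) hij hjm (c k)]
        rfl)
  refine ⟨κ', a, fun q => Ring.DirectLimit.of G (fun i j h => f i j h) m (y q),
    fun k => ?_, hy2⟩
  have : x k = Ring.DirectLimit.of G (fun i j h => f i j h) m (w k) := by
    rw [hw]; rw [Ring.DirectLimit.of_f]; exact (hxz k).symm
  rw [this, hy1 k, map_sum]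
  refine Finset.sum_congr rfl fun q _ => ?_
  rw [Algebra.smul_def, Algebra.smul_def, map_mul]
  congr 1
  exact Ring.DirectLimit.of_f (f := fun i j h => f i j h) (hij := him) (x := a k q)

/-- Every finitely generated ideal of a direct limit of rings is the image of a finitely
generated ideal at some finite stage. -/
theorem exists_stage (I : Ideal (Ring.DirectLimit G (fun i j h => f i j h))) (hI : I.FG) :
    ∃ (j : ι) (J : Ideal (G j)), J.FG ∧
      J.map (Ring.DirectLimit.of G (fun i j h => f i j h) j) = I := by
  classical
  obtain ⟨s, hs⟩ := hI
  have hx : ∀ x : Ring.DirectLimit G (fun i j h => f i j h),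
      ∃ j y, Ring.DirectLimit.of G (fun i j h => f i j h) j y = x := fun x =>
    Ring.DirectLimit.exists_of x
  choose idx elt helt using hx
  obtain ⟨j, hj⟩ := (s.image idx).exists_le
  have hidx : ∀ x ∈ s, idx x ≤ j := fun x hx => hj _ (Finset.mem_image_of_mem idx hx)
  set g : Ring.DirectLimit G (fun i j h => f i j h) → G j := fun x =>
    if h : idx x ≤ j then f (idx x) j h (elt x) else 0 with hg
  have hgx : ∀ x ∈ s, Ring.DirectLimit.of G (fun i j h => f i j h) j (g x) = x := by
    intro x hxs
    rw [hg]
    simp only [hidx x hxs, dif_pos]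
    rw [Ring.DirectLimit.of_f]
    exact helt x
  refine ⟨j, Ideal.span (g '' ↑s), ⟨s.image g, by rw [Finset.coe_image]⟩, ?_⟩
  rw [Ideal.map_span, ← Set.image_comp, ← hs]
  congr 1
  refine Set.EqOn.image_eq_self ?_
  intro x hxs
  exact hgx x hxs

end DirectLimit

/-- The colimit of a filtered (directed) system of regular coherent commutative
rings with flat transition maps is regular coherent. -/
theorem stmt_11 (ι : Type) [Preorder ι] [IsDirected ι (· ≤ ·)] [Nonempty ι]
    (G : ι → Type) [∀ i, CommRing (G i)]
    (f : ∀ i j, i ≤ j → G i →+* G j)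
    [DirectedSystem G (fun i j h => f i j h)]
    (hflat : ∀ (i j : ι) (h : i ≤ j), (f i j h).Flat)
    (hreg : ∀ i, IsRegularCoherentRing (G i)) :
    IsRegularCoherentRing (Ring.DirectLimit G (fun i j h => f i j h)) := by
  constructor
  · intro I hI
    obtain ⟨j, J, hJfg, rfl⟩ := exists_stage ι G f I hI
    letI : Algebra (G j) (Ring.DirectLimit G (fun i j h => f i j h)) :=
      (Ring.DirectLimit.of G (fun i j h => f i j h) j).toAlgebra
    haveI : Module.Flat (G j) (Ring.DirectLimit G (fun i j h => f i j h)) :=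
      directLimit_flat ι G f hflat j
    exact fp_of_map J ((hreg j).1 J hJfg)
  · intro I hI
    obtain ⟨j, J, hJfg, rfl⟩ := exists_stage ι G f I hI
    letI : Algebra (G j) (Ring.DirectLimit G (fun i j h => f i j h)) :=
      (Ring.DirectLimit.of G (fun i j h => f i j h) j).toAlgebra
    haveI : Module.Flat (G j) (Ring.DirectLimit G (fun i j h => f i j h)) :=
      directLimit_flat ι G f hflat j
    exact hfpd_of_map J ((hreg j).2 J hJfg)
end

section
/- Let A be a commutative ring that is Henselian along an ideal I ⊆ A, and let i: Spec(A/I) → Spec(A) be the closed immersion induced by the quotient map A → A/I. Then i induces a homeomorphism (in particular a bijection) between the space of connected components of Spec(A/I) and the space of connected components of Spec(A). -/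
open PrimeSpectrum Polynomial

section Aux

variable {R : Type*} [CommRing R]

/-- Finitely many idempotents generate an ideal generated by a single idempotent. -/
lemma aux_span_finset_idem (s : Finset R) (h : ∀ e ∈ s, IsIdempotentElem e) :
    ∃ ε : R, IsIdempotentElem ε ∧ Ideal.span (s : Set R) = Ideal.span {ε} := by
  classical
  induction s using Finset.induction with
  | empty =>
    refine ⟨0, IsIdempotentElem.zero, ?_⟩
    simp only [Finset.coe_empty, Ideal.span_empty]
    exact (Ideal.span_singleton_eq_bot.mpr rfl).symm
  | @insert a s ha ih =>
    obtain ⟨ε, hε, hspan⟩ := ih fun e he => h e (Finset.mem_insert_of_mem he)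
    have ha' : a * a = a := h a (Finset.mem_insert_self a s)
    have hε' : ε * ε = ε := hε
    refine ⟨a + ε - a * ε, ?_, ?_⟩
    · show (a + ε - a * ε) * (a + ε - a * ε) = a + ε - a * ε
      linear_combination (1 - 2*ε + ε*ε) * ha' + (1 - a) * hε'
    · rw [Finset.coe_insert, Ideal.span_insert, hspan]
      apply le_antisymm
      · apply sup_le <;> rw [Ideal.span_singleton_le_iff_mem, Ideal.mem_span_singleton']
        · exact ⟨a, by linear_combination (1 - ε) * ha'⟩
        · exact ⟨ε, by linear_combination (1 - a) * hε'⟩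
      · rw [Ideal.span_singleton_le_iff_mem]
        refine sub_mem (add_mem (Ideal.mem_sup_left ?_) (Ideal.mem_sup_right ?_))
          (Ideal.mem_sup_right (Ideal.mul_mem_left _ a ?_)) <;>
          exact Ideal.subset_span rfl

/-- The common zero set of the idempotents contained in a prime is preconnected. -/
lemma aux_zeroLocus_idem_preconnected (x : PrimeSpectrum R) :
    IsPreconnected (zeroLocus {e : R | IsIdempotentElem e ∧ e ∈ x.asIdeal}) := by
  classical
  set S : Set R := {e : R | IsIdempotentElem e ∧ e ∈ x.asIdeal} with hS
  set T : Ideal R := Ideal.span S with hT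
  have hxC : x ∈ zeroLocus S := fun e he => he.2
  have hTq : ∀ q : PrimeSpectrum R, q ∈ zeroLocus S → T ≤ q.asIdeal := by
    intro q hq
    rw [hT, Ideal.span_le]
    exact hq
  rw [isPreconnected_iff_subset_of_disjoint_closed]
  intro Z₁ Z₂ hZ₁ hZ₂ hsub hdisj
  obtain ⟨K₁, rfl⟩ := (isClosed_iff_zeroLocus_ideal Z₁).mp hZ₁
  obtain ⟨K₂, rfl⟩ := (isClosed_iff_zeroLocus_ideal Z₂).mp hZ₂
  -- `1 = j + a + b` with `j ∈ T`, `a ∈ K₁`, `b ∈ K₂`.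
  have htop : T ⊔ K₁ ⊔ K₂ = ⊤ := by
    rw [← zeroLocus_empty_iff_eq_top, ← Set.subset_empty_iff, ← hdisj]
    intro q hq
    rw [zeroLocus_sup, zeroLocus_sup] at hq
    have h1 : q ∈ zeroLocus S := by
      have := hq.1.1
      rwa [hT, zeroLocus_span] at this
    exact ⟨h1, hq.1.2, hq.2⟩
  have hone : (1 : R) ∈ T ⊔ K₁ ⊔ K₂ := htop ▸ Submodule.mem_top
  rw [Submodule.mem_sup] at hone
  obtain ⟨y, hy, b, hb, hyb⟩ := hone
  rw [Submodule.mem_sup] at hy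
  obtain ⟨j, hj, a, haK, hja⟩ := hy
  -- `a * b` lies in the radical of `T`.
  have hab : a * b ∈ T.radical := by
    rw [← vanishingIdeal_zeroLocus_eq_radical, mem_vanishingIdeal]
    intro q hq
    have hq' : q ∈ zeroLocus S := by rwa [hT, zeroLocus_span] at hq
    rcases hsub hq' with h | h
    · exact q.asIdeal.mul_mem_right b (h haK)
    · exact q.asIdeal.mul_mem_left a (h hb)
  obtain ⟨n, hn⟩ := Ideal.mem_radical_iff.mp hab
  have hn' : (a * b) ^ (n + 1) ∈ T := by
    rw [pow_succ']
    exact T.mul_mem_left _ hn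
  set m := n + 1 with hm
  -- `(a^m) + (b^m) + T = ⊤`.
  have htop2 : Ideal.span {a ^ m} ⊔ Ideal.span {b ^ m} ⊔ T = ⊤ := by
    rw [← zeroLocus_empty_iff_eq_top, ← Set.subset_empty_iff]
    intro q hq
    rw [zeroLocus_sup, zeroLocus_sup] at hq
    have haq : a ∈ q.asIdeal := by
      have := hq.1.1
      rw [zeroLocus_span, mem_zeroLocus, Set.singleton_subset_iff] at this
      exact (q.2.pow_mem_iff_mem m (Nat.succ_pos n)).mp this
    have hbq : b ∈ q.asIdeal := by
      have := hq.1.2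
      rw [zeroLocus_span, mem_zeroLocus, Set.singleton_subset_iff] at this
      exact (q.2.pow_mem_iff_mem m (Nat.succ_pos n)).mp this
    have hjq : j ∈ q.asIdeal := hq.2 hj
    exact False.elim (q.2.ne_top ((Ideal.eq_top_iff_one _).mpr
      (by rw [← hyb, ← hja]; exact add_mem (add_mem hjq haq) hbq)))
  have hone2 : (1 : R) ∈ Ideal.span {a ^ m} ⊔ Ideal.span {b ^ m} ⊔ T := htop2 ▸ Submodule.mem_top
  rw [Submodule.mem_sup] at hone2
  obtain ⟨y2, hy2, j', hj', hsum⟩ := hone2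
  rw [Submodule.mem_sup] at hy2
  obtain ⟨e, he', d', hd', hcd⟩ := hy2
  obtain ⟨u, hu⟩ := Ideal.mem_span_singleton'.mp he'
  obtain ⟨v, hv⟩ := Ideal.mem_span_singleton'.mp hd'
  have hsum1 : e + d' + j' = 1 := by rw [← hsum, ← hcd]
  -- `e` is idempotent modulo `T`.
  have hedT : e * d' ∈ T := by
    have hrw : e * d' = (a * b) ^ m * (u * v) := by rw [← hu, ← hv]; ring
    rw [hrw]
    exact T.mul_mem_right _ hn'
  have he2 : e * e - e ∈ T := by
    have h1 : e * e - e = -(e * d' + e * j') := by linear_combination (e : R) * hsum1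
    rw [h1]
    exact neg_mem (add_mem hedT (T.mul_mem_left e hj'))
  -- find an idempotent `ε ∈ T` with `e * e - e ∈ (ε)`.
  obtain ⟨t, htS, htmem⟩ := Submodule.mem_span_finite_of_mem_span he2
  obtain ⟨ε, hε, hεspan⟩ := aux_span_finset_idem t fun e he => (htS he).1
  have hspanT : Ideal.span (t : Set R) ≤ T := by
    rw [hT, Ideal.span_le]
    exact fun z hz => Ideal.subset_span (htS hz)
  have hεT : ε ∈ T := by
    apply hspanT
    rw [hεspan]
    exact Ideal.subset_span rfl
  have htmem' : e * e - e ∈ Ideal.span ({ε} : Set R) := by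
    rw [← hεspan]; exact htmem
  obtain ⟨r, hr⟩ := Ideal.mem_span_singleton'.mp htmem' 
  have hε' : ε * ε = ε := hε
  -- the honest idempotent `f`.
  set f : R := e * (1 - ε) with hf_def
  have hf : IsIdempotentElem f := by
    show f * f = f
    rw [hf_def]
    linear_combination (e*e - r) * hε' + (ε - 1) * hr
  have hfe : f - e ∈ T := by
    have : f - e = -(e * ε) := by rw [hf_def]; ring
    rw [this]
    exact neg_mem (T.mul_mem_left e hεT)
  -- behaviour of `f` on the two pieces.
  have hfZ₁ : ∀ q ∈ zeroLocus S, q ∈ zeroLocus (K₁ : Set R) → f ∈ q.asIdeal := by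
    intro q hq hq1
    have haq : a ∈ q.asIdeal := hq1 haK
    have heq : e ∈ q.asIdeal := by
      rw [← hu]
      exact q.asIdeal.mul_mem_left u (q.asIdeal.pow_mem_of_mem haq m (Nat.succ_pos n))
    have : f = (f - e) + e := by ring
    rw [this]
    exact add_mem (hTq q hq hfe) heq
  have hfZ₂ : ∀ q ∈ zeroLocus S, q ∈ zeroLocus (K₂ : Set R) →
      (1 - f) ∈ q.asIdeal ∧ f ∉ q.asIdeal := by
    intro q hq hq2
    have hbq : b ∈ q.asIdeal := hq2 hb
    have hdq : d' ∈ q.asIdeal := by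
      rw [← hv]
      exact q.asIdeal.mul_mem_left v (q.asIdeal.pow_mem_of_mem hbq m (Nat.succ_pos n))
    have h1e : 1 - e ∈ q.asIdeal := by
      have : 1 - e = d' + j' := by linear_combination -hsum1
      rw [this]
      exact add_mem hdq (hTq q hq hj')
    have h1f : 1 - f ∈ q.asIdeal := by
      have : 1 - f = (1 - e) + -(f - e) := by ring
      rw [this]
      exact add_mem h1e (neg_mem (hTq q hq hfe))
    refine ⟨h1f, fun hfq => q.2.ne_top ((Ideal.eq_top_iff_one _).mpr ?_)⟩
    have : (1 : R) = (1 - f) + f := by ring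
    rw [this]
    exact add_mem h1f hfq
  rcases hsub hxC with hx1 | hx2
  · -- `f` is an idempotent contained in `x`, hence in `S`, hence in every point of `C`.
    have hfS : f ∈ S := ⟨hf, hfZ₁ x hxC hx1⟩
    left
    intro q hq
    rcases hsub hq with h | h
    · exact h
    · exact absurd (hq hfS) (hfZ₂ q hq h).2
  · have hgS : (1 - f) ∈ S := ⟨hf.one_sub, (hfZ₂ x hxC hx2).1⟩
    right
    intro q hq
    rcases hsub hq with h | h
    · exact absurd ((Ideal.eq_top_iff_one _).mpr (by
        have : (1 : R) = (1 - f) + f := by ring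
        rw [this]
        exact add_mem (hq hgS) (hfZ₁ q hq h))) q.2.ne_top
    · exact h

/-- In the prime spectrum of a commutative ring, connected components coincide with
quasicomponents. -/
lemma aux_connectedComponent_eq_sInter (x : PrimeSpectrum R) :
    connectedComponent x = ⋂₀ {U : Set (PrimeSpectrum R) | IsClopen U ∧ x ∈ U} := by
  apply Set.Subset.antisymm
  · intro y hy U hU
    exact hU.1.connectedComponent_subset hU.2 hy
  · -- the quasicomponent is the zero locus of the idempotents in `x`, which is connected.
    have h1 : ⋂₀ {U : Set (PrimeSpectrum R) | IsClopen U ∧ x ∈ U}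
        ⊆ zeroLocus {e : R | IsIdempotentElem e ∧ e ∈ x.asIdeal} := by
      intro q hq e he
      have hclopen : IsClopen (zeroLocus {e} : Set (PrimeSpectrum R)) :=
        isClopen_iff_zeroLocus.mpr ⟨e, he.1, rfl⟩
      have hx : x ∈ zeroLocus {e} := fun z hz => by
        rw [Set.mem_singleton_iff] at hz; rw [hz]; exact he.2
      have := hq _ ⟨hclopen, hx⟩
      exact this rfl
    refine h1.trans (IsPreconnected.subset_connectedComponent
      (aux_zeroLocus_idem_preconnected x) fun e he => he.2)

/-- The space of connected components of a prime spectrum is Hausdorff. -/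
lemma aux_t2_connectedComponents :
    T2Space (ConnectedComponents (PrimeSpectrum R)) := by
  constructor
  intro a b hab
  obtain ⟨x, rfl⟩ := ConnectedComponents.surjective_coe a
  obtain ⟨y, rfl⟩ := ConnectedComponents.surjective_coe b
  have hxy : y ∉ connectedComponent x := by
    intro h
    exact hab (ConnectedComponents.coe_eq_coe.mpr (connectedComponent_eq h))
  rw [aux_connectedComponent_eq_sInter] at hxy
  rw [Set.mem_sInter] at hxy
  push_neg at hxy
  obtain ⟨U, ⟨hU, hxU⟩, hyU⟩ := hxy
  have hsat : ∀ V : Set (PrimeSpectrum R), IsClopen V →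
      (ConnectedComponents.mk : PrimeSpectrum R → _) ⁻¹'
        ((ConnectedComponents.mk : PrimeSpectrum R → _) '' V) = V := by
    intro V hV
    apply Set.Subset.antisymm
    · rintro z hz
      obtain ⟨w, hw, hzw⟩ := hz
      have : connectedComponent w = connectedComponent z :=
        ConnectedComponents.coe_eq_coe.mp hzw
      exact hV.connectedComponent_subset hw (this ▸ mem_connectedComponent)
    · exact Set.subset_preimage_image _ _
  refine ⟨ConnectedComponents.mk '' U, ConnectedComponents.mk '' Uᶜ, ?_, ?_, ?_, ?_, ?_⟩
  · rw [← ConnectedComponents.isQuotientMap_coe.isOpen_preimage, hsat U hU]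
    exact hU.2
  · rw [← ConnectedComponents.isQuotientMap_coe.isOpen_preimage, hsat Uᶜ hU.compl]
    exact hU.compl.2
  · exact Set.mem_image_of_mem _ hxU
  · exact Set.mem_image_of_mem _ hyU
  · rw [Set.disjoint_left]
    rintro c ⟨z, hz, rfl⟩ ⟨w, hw, hwz⟩
    have : connectedComponent w = connectedComponent z :=
      ConnectedComponents.coe_eq_coe.mp hwz
    exact hw (hU.connectedComponent_subset hz (this ▸ mem_connectedComponent))

end Aux

/-- Idempotents lift along a Henselian pair. -/
lemma aux_lift_idempotent (A : Type) [CommRing A] (I : Ideal A) [HenselianRing A I]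
    (eb : A ⧸ I) (heb : IsIdempotentElem eb) :
    ∃ e : A, IsIdempotentElem e ∧ Ideal.Quotient.mk I e = eb := by
  obtain ⟨a₀, rfl⟩ := Ideal.Quotient.mk_surjective eb
  have heb' : (Ideal.Quotient.mk I a₀) * (Ideal.Quotient.mk I a₀) = Ideal.Quotient.mk I a₀ := heb
  have hIa : a₀ * a₀ - a₀ ∈ I := by
    rw [← Ideal.Quotient.eq_zero_iff_mem, map_sub, map_mul, heb', sub_self]
  have hmonic : (X ^ 2 - X : A[X]).Monic := monic_X_pow_sub (p := (X : A[X])) (n := 2) (degree_X_le.trans_lt (by exact_mod_cast Nat.one_lt_two))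
  have heval : (X ^ 2 - X : A[X]).eval a₀ ∈ I := by
    have h0 : (X ^ 2 - X : A[X]).eval a₀ = a₀ * a₀ - a₀ := by
      simp only [eval_sub, eval_pow, eval_X]
      ring
    rw [h0]
    exact hIa
  have hderiv : IsUnit (Ideal.Quotient.mk I ((derivative (X ^ 2 - X : A[X])).eval a₀)) := by
    have h1 : (derivative (X ^ 2 - X : A[X])).eval a₀ = 2 * a₀ - 1 := by
      simp only [derivative_sub, derivative_X_pow, derivative_X, eval_sub, eval_mul, eval_one,
        eval_natCast, eval_X, eval_pow, eval_C]
      push_cast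
      ring
    rw [h1]
    refine IsUnit.of_mul_eq_one (Ideal.Quotient.mk I (2 * a₀ - 1)) ?_
    rw [← map_mul, ← map_one (Ideal.Quotient.mk I), Ideal.Quotient.mk_eq_mk_iff_sub_mem]
    have h2 : (2 * a₀ - 1) * (2 * a₀ - 1) - 1 = 4 * (a₀ * a₀ - a₀) := by ring
    rw [h2]
    exact I.mul_mem_left 4 hIa
  obtain ⟨a, ha, haI⟩ := HenselianRing.is_henselian (X ^ 2 - X : A[X]) hmonic a₀ heval hderiv
  refine ⟨a, ?_, ?_⟩
  · have h3 : a ^ 2 - a = 0 := by simpa using ha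
    show a * a = a
    linear_combination h3
  · rwa [Ideal.Quotient.mk_eq_mk_iff_sub_mem]

/-- Let `A` be a commutative ring which is Henselian along an ideal `I`, and
let `i : Spec(A/I) → Spec(A)` be the closed immersion induced by the quotient map `A → A/I`.
Then `i` induces a homeomorphism between the spaces of connected components of `Spec(A/I)` and
of `Spec(A)`. -/
theorem stmt_15 (A : Type) [CommRing A] (I : Ideal A) [HenselianRing A I] :
    IsHomeomorph
      ((PrimeSpectrum.continuous_comap (Ideal.Quotient.mk I)).connectedComponentsMap :
        ConnectedComponents (PrimeSpectrum (A ⧸ I)) → ConnectedComponents (PrimeSpectrum A)) := by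
  set i : PrimeSpectrum (A ⧸ I) → PrimeSpectrum A :=
    (PrimeSpectrum.comap (Ideal.Quotient.mk I)) with hi
  set φ : ConnectedComponents (PrimeSpectrum (A ⧸ I)) → ConnectedComponents (PrimeSpectrum A) :=
    (PrimeSpectrum.continuous_comap (Ideal.Quotient.mk I)).connectedComponentsMap with hφ
  have hφcoe : ∀ y : PrimeSpectrum (A ⧸ I), φ (ConnectedComponents.mk y)
      = ConnectedComponents.mk (i y) := fun y => rfl
  have hcont : Continuous φ :=
    Continuous.connectedComponentsMap_continuous _
  have hbij : Function.Bijective φ := by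
    constructor
    · -- injectivity
      intro c₁ c₂ hc
      obtain ⟨y₁, rfl⟩ := ConnectedComponents.surjective_coe c₁
      obtain ⟨y₂, rfl⟩ := ConnectedComponents.surjective_coe c₂
      have hcomp : connectedComponent (i y₁) = connectedComponent (i y₂) :=
        ConnectedComponents.coe_eq_coe.mp (by rw [← hφcoe, ← hφcoe]; exact hc)
      show (ConnectedComponents.mk y₁ : ConnectedComponents (PrimeSpectrum (A ⧸ I)))
        = ConnectedComponents.mk y₂
      rw [ConnectedComponents.coe_eq_coe']
      rw [aux_connectedComponent_eq_sInter]
      intro V hV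
      obtain ⟨eb, heb, rfl⟩ := PrimeSpectrum.isClopen_iff.mp hV.1
      obtain ⟨e, he, hemk⟩ := aux_lift_idempotent A I eb heb
      have hBclopen : IsClopen (PrimeSpectrum.basicOpen e : Set (PrimeSpectrum A)) :=
        PrimeSpectrum.isClopen_iff.mpr ⟨e, he, rfl⟩
      have hmem : ∀ y : PrimeSpectrum (A ⧸ I),
          i y ∈ PrimeSpectrum.basicOpen e ↔ y ∈ PrimeSpectrum.basicOpen eb := by
        intro y
        have hasI : (i y).asIdeal = Ideal.comap (Ideal.Quotient.mk I) y.asIdeal := rfl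
        rw [← hemk, PrimeSpectrum.mem_basicOpen, PrimeSpectrum.mem_basicOpen, hasI,
          Ideal.mem_comap]
      have hy₂B : i y₂ ∈ PrimeSpectrum.basicOpen e := (hmem y₂).mpr hV.2
      have hy₁B : i y₁ ∈ PrimeSpectrum.basicOpen e := by
        have h1 : i y₁ ∈ connectedComponent (i y₂) := hcomp ▸ mem_connectedComponent
        exact hBclopen.connectedComponent_subset hy₂B h1
      exact (hmem y₁).mp hy₁B
    · -- surjectivity
      intro c
      obtain ⟨x, rfl⟩ := ConnectedComponents.surjective_coe c
      -- find a closed point in the connected component of `x`.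
      obtain ⟨J, hJ⟩ := (isClosed_iff_zeroLocus_ideal _).mp
        (isClosed_connectedComponent (x := x))
      have hxJ : x ∈ zeroLocus (J : Set A) := hJ ▸ mem_connectedComponent
      have hJx : J ≤ x.asIdeal := hxJ
      have hJtop : J ≠ ⊤ := fun h => x.2.ne_top (top_le_iff.mp (h ▸ hJx))
      obtain ⟨M, hM, hJM⟩ := Ideal.exists_le_maximal J hJtop
      set p : PrimeSpectrum A := ⟨M, hM.isPrime⟩ with hp
      have hpcomp : p ∈ connectedComponent x := by
        rw [hJ]
        exact fun z hz => hJM hz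
      have hIM : I ≤ M := by
        refine le_trans (HenselianRing.jac (I := I)) ?_
        exact sInf_le ⟨bot_le, hM⟩
      have hrange : p ∈ Set.range i := by
        rw [hi, range_comap_of_surjective _ _ Ideal.Quotient.mk_surjective]
        intro z hz
        rw [Ideal.mk_ker] at hz
        exact hIM hz
      obtain ⟨y, hy⟩ := hrange
      refine ⟨ConnectedComponents.mk y, ?_⟩
      rw [hφcoe, hy]
      exact ConnectedComponents.coe_eq_coe.mpr (connectedComponent_eq hpcomp).symm
  -- openness via compactness and Hausdorffness
  have ht2 : T2Space (ConnectedComponents (PrimeSpectrum A)) := aux_t2_connectedComponents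
  have hcompact : CompactSpace (ConnectedComponents (PrimeSpectrum (A ⧸ I))) :=
    Quotient.compactSpace
  have hclosed : IsClosedMap φ := hcont.isClosedMap
  refine ⟨hcont, ?_, hbij⟩
  intro U hU
  have : φ '' U = (φ '' Uᶜ)ᶜ := by
    rw [← Set.image_compl_eq hbij, compl_compl]
  rw [this]
  exact (hclosed _ hU.isClosed_compl).isOpen_compl
end

section
/- Let Λ be a topological abelian group which is the colimit, with the colimit topology, of a countable filtered system (Λ_i) of quasi-compact Hausdorff topological abelian groups with injective continuous transition maps. Then for every profinite set S, every continuous map S → Λ factors through some Λ_i, and the natural homomorphism colim_i C(S, Λ_i) → C(S, Λ) is an isomorphism of abelian groups. -/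
/-- Let `Λ` be a topological abelian group which is the colimit, with the
colimit (final) topology, of a countable filtered system `(G i)` of quasi-compact Hausdorff
topological abelian groups with injective continuous transition maps.  Then for every profinite
set `S`, every continuous map `S → Λ` factors (continuously) through some `G i`, and the natural
homomorphism `colim_i C(S, G i) → C(S, Λ)` is an isomorphism of abelian groups (expressed here
by the surjectivity of the induced map together with its injectivity, elementwise). -/
theorem stmt_16 (ι : Type) [Countable ι] [Preorder ι] [IsDirected ι (· ≤ ·)] [Nonempty ι]
    (G : ι → Type) [∀ i, AddCommGroup (G i)] [∀ i, TopologicalSpace (G i)]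
    [∀ i, IsTopologicalAddGroup (G i)] [∀ i, CompactSpace (G i)] [∀ i, T2Space (G i)]
    (f : ∀ i j, i ≤ j → G i →+ G j)
    (hfcont : ∀ (i j : ι) (h : i ≤ j), Continuous (f i j h))
    (hfinj : ∀ (i j : ι) (h : i ≤ j), Function.Injective (f i j h))
    (hftrans : ∀ (i j k : ι) (hij : i ≤ j) (hjk : j ≤ k) (x : G i),
      f j k hjk (f i j hij x) = f i k (hij.trans hjk) x)
    (Λ : Type) [AddCommGroup Λ] [tΛ : TopologicalSpace Λ]
    (e : ∀ i, G i →+ Λ)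
    (hecompat : ∀ (i j : ι) (h : i ≤ j) (x : G i), e j (f i j h x) = e i x)
    (heinj : ∀ i, Function.Injective (e i))
    (hesurj : ∀ x : Λ, ∃ i y, e i y = x)
    (htop : tΛ = ⨆ i, TopologicalSpace.coinduced (e i) inferInstance)
    (S : Type) [TopologicalSpace S] [CompactSpace S] [T2Space S] [TotallyDisconnectedSpace S] :
    (∀ φ : C(S, Λ), ∃ (i : ι) (g : C(S, G i)), ∀ s, e i (g s) = φ s) ∧
    (∀ (i : ι) (g : C(S, G i)), (∀ s, e i (g s) = 0) →
      ∃ (j : ι) (h : i ≤ j), ∀ s, f i j h (g s) = 0) := by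
  classical
  -- basic facts about the topology on Λ
  have hopen : ∀ (U : Set Λ), IsOpen U ↔ ∀ i, IsOpen ((e i) ⁻¹' U) := by
    intro U
    rw [htop, isOpen_iSup_iff]
    exact forall_congr' fun i => isOpen_coinduced
  have hclosed : ∀ (C : Set Λ), IsClosed C ↔ ∀ i, IsClosed ((e i) ⁻¹' C) := by
    intro C
    simp_rw [← isOpen_compl_iff, hopen Cᶜ, Set.preimage_compl]
  have hecont : ∀ i, Continuous (e i) := by
    intro i
    rw [continuous_iff_coinduced_le, htop]
    exact le_iSup (fun i => TopologicalSpace.coinduced (e i) inferInstance) i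
  -- ranges are monotone
  have hrange : ∀ i j (h : i ≤ j), Set.range (e i) ⊆ Set.range (e j) := by
    rintro i j h _ ⟨x, rfl⟩
    exact ⟨f i j h x, hecompat i j h x⟩
  -- images of closed sets are closed
  have himgclosed : ∀ i (C : Set (G i)), IsClosed C → IsClosed ((e i) '' C) := by
    intro i C hC
    rw [hclosed]
    intro j
    obtain ⟨k, hik, hjk⟩ := directed_of (· ≤ ·) i j
    have : (e j) ⁻¹' ((e i) '' C) = (f j k hjk) ⁻¹' ((f i k hik) '' C) := by
      ext y
      simp only [Set.mem_preimage, Set.mem_image]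
      constructor
      · rintro ⟨c, hc, hcy⟩
        refine ⟨c, hc, heinj k ?_⟩
        rw [hecompat i k hik, hecompat j k hjk, hcy]
      · rintro ⟨c, hc, hcy⟩
        refine ⟨c, hc, ?_⟩
        rw [← hecompat i k hik, hcy, hecompat j k hjk]
    rw [this]
    exact (((hC.isCompact.image (hfcont i k hik)).isClosed)).preimage (hfcont j k hjk)
  -- a monotone cofinal sequence
  obtain ⟨u, hu_mono, hu_tendsto⟩ := Filter.exists_seq_monotone_tendsto_atTop_atTop ι
  have hu_cofinal : ∀ i : ι, ∃ n : ℕ, i ≤ u n := by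
    intro i
    have := (Filter.tendsto_atTop.mp hu_tendsto) i
    obtain ⟨n, hn⟩ := this.exists
    exact ⟨n, hn⟩
  constructor
  · intro φ
    -- Step 1: the image of φ is contained in some range
    have key : ∃ i, Set.range φ ⊆ Set.range (e i) := by
      by_contra hcon
      push_neg at hcon
      have hx : ∀ n : ℕ, ∃ x ∈ Set.range φ, x ∉ Set.range (e (u n)) := by
        intro n
        obtain ⟨x, hx1, hx2⟩ := Set.not_subset.mp (hcon (u n))
        exact ⟨x, hx1, hx2⟩
      choose x hx1 hx2 using hx
      set D : Set Λ := Set.range x with hD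
      -- every subset of D is closed
      have hsubclosed : ∀ T : Set Λ, T ⊆ D → IsClosed T := by
        intro T hT
        rw [hclosed]
        intro i
        obtain ⟨n, hn⟩ := hu_cofinal i
        have hfin : ((e i) ⁻¹' T).Finite := by
          have hsub : (e i) ⁻¹' T ⊆ (e i) ⁻¹' (x '' (Set.Iio n)) := by
            intro y hy
            obtain ⟨m, hm⟩ := hT hy
            by_cases hmn : m < n
            · exact ⟨m, hmn, hm⟩
            · exfalso
              apply hx2 m
              rw [hm]
              exact hrange i (u m) (le_trans hn (hu_mono (not_lt.mp hmn))) ⟨y, rfl⟩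
          exact Set.Finite.subset (Set.Finite.preimage
            (Set.injOn_of_injective (heinj i)) ((Set.finite_Iio n).image x)) hsub
        exact hfin.isClosed
      have hDclosed : IsClosed D := hsubclosed D le_rfl
      have hDsub : D ⊆ Set.range φ := by
        rintro _ ⟨n, rfl⟩; exact hx1 n
      have hDcompact : IsCompact D :=
        (isCompact_range φ.continuous).of_isClosed_subset hDclosed hDsub
      have hdisc : DiscreteTopology D := by
        rw [discreteTopology_iff_isOpen_singleton]
        intro a
        have hcl : IsClosed (D \ {a.1}) := hsubclosed _ Set.diff_subset
        have hop : IsOpen ((Subtype.val : D → Λ) ⁻¹' (D \ {a.1})ᶜ) :=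
          hcl.isOpen_compl.preimage continuous_subtype_val
        convert hop using 1
        ext b
        simp only [Set.mem_singleton_iff, Set.mem_preimage, Set.mem_compl_iff, Set.mem_diff,
          not_and, not_not]
        constructor
        · rintro rfl; intro _; rfl
        · intro hb; exact Subtype.ext (hb b.2)
      have hDfin : D.Finite := hDcompact.finite (isDiscrete_iff_discreteTopology.mpr hdisc)
      -- D finite: find a common upper bound
      choose idx y hidx using hesurj
      obtain ⟨M, hM⟩ := Finset.exists_le (hDfin.toFinset.image idx)
      obtain ⟨n, hn⟩ := hu_cofinal M
      refine hx2 n ?_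
      have h1 : idx (x n) ≤ M := hM _ (Finset.mem_image_of_mem idx (hDfin.mem_toFinset.mpr ⟨n, rfl⟩))
      exact hrange M (u n) hn (hrange (idx (x n)) M h1 ⟨y (x n), hidx (x n)⟩)
    obtain ⟨i, hi⟩ := key
    have hy : ∀ s : S, ∃ y, e i y = φ s := fun s => hi ⟨s, rfl⟩
    choose g hg using hy
    have hgcont : Continuous g := by
      rw [continuous_iff_isClosed]
      intro C hC
      have : g ⁻¹' C = φ ⁻¹' ((e i) '' C) := by
        ext s
        simp only [Set.mem_preimage, Set.mem_image]
        constructor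
        · intro h; exact ⟨g s, h, hg s⟩
        · rintro ⟨c, hc, hcs⟩
          have : c = g s := heinj i (by rw [hg s, hcs])
          rwa [← this]
      rw [this]
      exact (himgclosed i C hC).preimage φ.continuous
    exact ⟨i, ⟨g, hgcont⟩, hg⟩
  · intro i g hg
    refine ⟨i, le_refl i, fun s => ?_⟩
    have : g s = 0 := heinj i (by rw [hg s, map_zero])
    rw [this, map_zero]
end

section
/- Let φ: Λ → Λ' be a surjective homomorphism of commutative rings whose kernel consists of nilpotent elements. Let M^a → M^{a+1} → ⋯ → M^b be a bounded complex of finitely generated projective Λ-modules such that the complex M^a ⊗_Λ Λ' → ⋯ → M^b ⊗_Λ Λ' obtained by applying − ⊗_Λ Λ' termwise is exact. Then the original complex M^a → ⋯ → M^b is exact. -/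
open TensorProduct

section Stmt17Aux

variable {Λ Λ' : Type} [CommRing Λ] [CommRing Λ'] [Algebra Λ Λ']

private lemma stmt17_subsingleton (M : Type) [AddCommGroup M] [Module Λ M]
    [Subsingleton M] : Subsingleton (Λ' ⊗[Λ] M) := by
  have h : ∀ z : Λ' ⊗[Λ] M, z = 0 := by
    intro z
    induction z using TensorProduct.induction_on with
    | zero => rfl
    | tmul x m => rw [Subsingleton.elim m (0 : M), tmul_zero]
    | add x y hx hy => rw [hx, hy, add_zero]
  exact ⟨fun a b => by rw [h a, h b]⟩

private lemma stmt17_mk_surjective (hsurj : Function.Surjective (algebraMap Λ Λ'))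
    (M : Type) [AddCommGroup M] [Module Λ M] :
    Function.Surjective (TensorProduct.mk Λ Λ' M 1) := by
  intro z
  induction z using TensorProduct.induction_on with
  | zero => exact ⟨0, map_zero _⟩
  | tmul x m =>
    obtain ⟨lam, hlam⟩ := hsurj x
    refine ⟨lam • m, ?_⟩
    rw [TensorProduct.mk_apply, tmul_smul, smul_tmul', ← hlam, Algebra.smul_def, mul_one]
  | add x y hx hy =>
    obtain ⟨mx, hmx⟩ := hx
    obtain ⟨my, hmy⟩ := hy
    exact ⟨mx + my, by rw [map_add, hmx, hmy]⟩

private lemma stmt17_ker (hsurj : Function.Surjective (algebraMap Λ Λ'))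
    (M : Type) [AddCommGroup M] [Module Λ M] (x : M)
    (hx : (1 : Λ') ⊗ₜ[Λ] x = 0) :
    x ∈ (RingHom.ker (algebraMap Λ Λ')) • (⊤ : Submodule Λ M) := by
  set I : Ideal Λ := RingHom.ker (algebraMap Λ Λ') with hI
  set al : Λ →ₗ[Λ] Λ' := Algebra.linearMap Λ Λ' with hal
  have halsurj : Function.Surjective al := hsurj
  let E : (Λ ⧸ LinearMap.ker al) ≃ₗ[Λ] Λ' := al.quotKerEquivOfSurjective halsurj
  let ψ : Λ →ₗ[Λ] (M →ₗ[Λ] M ⧸ (I • (⊤ : Submodule Λ M))) :=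
    LinearMap.toSpanSingleton Λ _ (Submodule.mkQ _)
  have hker : LinearMap.ker al ≤ LinearMap.ker ψ := by
    intro a ha
    have haI : a ∈ I := ha
    ext m
    have : a • m ∈ I • (⊤ : Submodule Λ M) :=
      Submodule.smul_mem_smul haI Submodule.mem_top
    simp only [ψ, LinearMap.toSpanSingleton_apply, LinearMap.smul_apply,
      LinearMap.zero_apply, Submodule.mkQ_apply]
    rw [← Submodule.Quotient.mk_smul]
    exact (Submodule.Quotient.mk_eq_zero _).mpr this
  let B : Λ' →ₗ[Λ] (M →ₗ[Λ] M ⧸ (I • (⊤ : Submodule Λ M))) :=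
    (Submodule.liftQ _ ψ hker) ∘ₗ (E.symm : Λ' →ₗ[Λ] (Λ ⧸ LinearMap.ker al))
  let f : (Λ' ⊗[Λ] M) →ₗ[Λ] M ⧸ (I • (⊤ : Submodule Λ M)) := TensorProduct.lift B
  obtain ⟨lam0, hlam0⟩ := halsurj 1
  have hE : E (Submodule.Quotient.mk lam0) = 1 := by
    exact (LinearMap.quotKerEquivOfSurjective_apply_mk (f := al) halsurj lam0).trans hlam0
  have hEsymm : E.symm 1 = Submodule.Quotient.mk lam0 := by
    rw [← hE, LinearEquiv.symm_apply_apply]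
  have hf : f ((1 : Λ') ⊗ₜ[Λ] x) = Submodule.Quotient.mk x := by
    have h1 : f ((1 : Λ') ⊗ₜ[Λ] x) = B 1 x := by
      simp [f, TensorProduct.lift.tmul]
    rw [h1]
    have h2 : B 1 x = ψ lam0 x := by
      simp only [B, LinearMap.comp_apply, LinearEquiv.coe_coe, hEsymm]
      rw [Submodule.liftQ_apply]
    rw [h2]
    simp only [ψ, LinearMap.toSpanSingleton_apply, LinearMap.smul_apply, Submodule.mkQ_apply]
    rw [← Submodule.Quotient.mk_smul]
    have hmem : lam0 • x - x ∈ I • (⊤ : Submodule Λ M) := by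
      have : (lam0 - 1) • x ∈ I • (⊤ : Submodule Λ M) := by
        refine Submodule.smul_mem_smul ?_ Submodule.mem_top
        have : algebraMap Λ Λ' (lam0 - 1) = 0 := by
          rw [map_sub, map_one]
          have : algebraMap Λ Λ' lam0 = 1 := hlam0
          rw [this, sub_self]
        exact this
      simpa [sub_smul] using this
    exact (Submodule.Quotient.eq _).mpr hmem
  have : (Submodule.Quotient.mk x : M ⧸ (I • (⊤ : Submodule Λ M))) = 0 := by
    rw [← hf, hx, map_zero]
  exact (Submodule.Quotient.mk_eq_zero _).mp this

private lemma stmt17_bij {I : Ideal Λ} (hjac : I ≤ Ideal.jacobson ⊥)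
    (M : Type) [AddCommGroup M] [Module Λ M] [Module.Finite Λ M]
    (e : M →ₗ[Λ] M) (h : ∀ x, e x - x ∈ I • (⊤ : Submodule Λ M)) :
    Function.Bijective e := by
  have h1 : (⊤ : Submodule Λ M) ≤ LinearMap.range e ⊔ I • ⊤ := by
    intro x _
    have hx : x = e x + -(e x - x) := by abel
    rw [hx]
    exact Submodule.add_mem_sup (LinearMap.mem_range_self e x) (Submodule.neg_mem _ (h x))
  have h2 : I • (⊤ : Submodule Λ M) ≤ LinearMap.range e :=
    Submodule.smul_le_of_le_smul_of_le_jacobson_bot Module.Finite.fg_top hjac h1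
  have hsurj : Function.Surjective e := by
    rw [← LinearMap.range_eq_top]
    exact top_le_iff.mp (h1.trans (sup_le le_rfl h2))
  exact ⟨OrzechProperty.injective_of_surjective_endomorphism e hsurj, hsurj⟩

end Stmt17Aux

set_option maxHeartbeats 1000000 in
/-- Let `Λ → Λ'` be a surjective homomorphism of commutative rings whose
kernel consists of nilpotent elements.  Let `M^a → M^{a+1} → ⋯ → M^b` be a bounded complex of
finitely generated projective `Λ`-modules (encoded as a `ℤ`-indexed complex whose terms vanish
outside `[a, b]`) such that the complex obtained by applying `− ⊗_Λ Λ'` termwise is exact.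
Then the original complex is exact. -/
theorem stmt_17 (Λ Λ' : Type) [CommRing Λ] [CommRing Λ'] [Algebra Λ Λ']
    (hsurj : Function.Surjective (algebraMap Λ Λ'))
    (hnil : ∀ x ∈ RingHom.ker (algebraMap Λ Λ'), IsNilpotent x)
    (a b : ℤ) (hab : a ≤ b)
    (M : ℤ → Type) [∀ i, AddCommGroup (M i)] [∀ i, Module Λ (M i)]
    [∀ i, Module.Finite Λ (M i)] [∀ i, Module.Projective Λ (M i)]
    (hbdd : ∀ i : ℤ, (i < a ∨ b < i) → Subsingleton (M i))
    (d : ∀ i : ℤ, M i →ₗ[Λ] M (i + 1))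
    (hcomplex : ∀ i : ℤ, (d (i + 1)).comp (d i) = 0)
    (hexact : ∀ i : ℤ,
      Function.Exact ((d i).baseChange Λ') ((d (i + 1)).baseChange Λ')) :
    ∀ i : ℤ, Function.Exact (d i) (d (i + 1)) := by
  classical
  have hjac : RingHom.ker (algebraMap Λ Λ') ≤ Ideal.jacobson ⊥ := by
    intro x hx
    rw [Ideal.mem_jacobson_bot]
    intro y
    exact ((Commute.all x y).isNilpotent_mul_right (hnil x hx)).isUnit_add_one
  -- pointwise complex identities
  have hdd : ∀ (k : ℤ) (z : M k), d (k + 1) (d k z) = 0 := by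
    intro k z
    have := LinearMap.congr_fun (hcomplex k) z
    simpa using this
  have hDD : ∀ (k : ℤ) (z : Λ' ⊗[Λ] M k),
      (d (k + 1)).baseChange Λ' ((d k).baseChange Λ' z) = 0 := by
    intro k z
    have h0 : ((d (k + 1)).comp (d k)).baseChange Λ' z = ((0 : M k →ₗ[Λ] M (k + 1 + 1)).baseChange Λ') z := by
      rw [hcomplex k]
    rw [LinearMap.baseChange_comp, LinearMap.baseChange_zero] at h0
    simpa using h0
  -- the splitting property over Λ'
  have hstep : ∀ k : ℤ,
      (∃ σ' : Λ' ⊗[Λ] M (k + 1 + 1) →ₗ[Λ'] Λ' ⊗[Λ] M (k + 1),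
        ∀ x, ((d (k + 1 + 1)).baseChange Λ') x = 0 → ((d (k + 1)).baseChange Λ') (σ' x) = x) →
      (∃ σ : Λ' ⊗[Λ] M (k + 1) →ₗ[Λ'] Λ' ⊗[Λ] M k,
        ∀ x, ((d (k + 1)).baseChange Λ') x = 0 → ((d k).baseChange Λ') (σ x) = x) := by
    intro k ⟨σ', hσ'⟩
    set Dk := (d k).baseChange Λ' with hDk
    set Dk1 := (d (k + 1)).baseChange Λ' with hDk1
    set π : (Λ' ⊗[Λ] M (k + 1)) →ₗ[Λ'] (Λ' ⊗[Λ] M (k + 1)) := LinearMap.id - σ' ∘ₗ Dk1 with hπ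
    have hπmem : ∀ x, π x ∈ LinearMap.range Dk := by
      intro x
      have h0 : Dk1 (π x) = 0 := by
        have h1 : Dk1 (σ' (Dk1 x)) = Dk1 x := hσ' (Dk1 x) (hDD (k + 1) x)
        simp only [hπ, LinearMap.sub_apply, LinearMap.id_apply, LinearMap.comp_apply, map_sub, h1,
          sub_self]
      obtain ⟨y, hy⟩ := (hexact k (π x)).mp h0
      exact ⟨y, hy⟩
    obtain ⟨σ, hσ⟩ := Module.projective_lifting_property (Dk.rangeRestrict)
      (π.codRestrict (LinearMap.range Dk) hπmem) Dk.surjective_rangeRestrict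
    refine ⟨σ, fun x hx => ?_⟩
    have h2 : Dk (σ x) = π x := by
      have := LinearMap.congr_fun hσ x
      exact congrArg Subtype.val this
    rw [h2]
    simp only [hπ, LinearMap.sub_apply, LinearMap.id_apply, LinearMap.comp_apply, hx, map_zero,
      sub_zero]
  -- all splittings exist, by descending induction
  have hR : ∀ k : ℤ,
      ∃ σ : Λ' ⊗[Λ] M (k + 1) →ₗ[Λ'] Λ' ⊗[Λ] M k,
        ∀ x, ((d (k + 1)).baseChange Λ') x = 0 → ((d k).baseChange Λ') (σ x) = x := by
    have hbase : ∀ k : ℤ, b ≤ k →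
        ∃ σ : Λ' ⊗[Λ] M (k + 1) →ₗ[Λ'] Λ' ⊗[Λ] M k,
          ∀ x, ((d (k + 1)).baseChange Λ') x = 0 → ((d k).baseChange Λ') (σ x) = x := by
      intro k hk
      haveI : Subsingleton (M (k + 1)) := hbdd (k + 1) (Or.inr (by omega))
      haveI : Subsingleton (Λ' ⊗[Λ] M (k + 1)) := stmt17_subsingleton (M (k + 1))
      exact ⟨0, fun x _ => by rw [LinearMap.zero_apply, map_zero]; exact Subsingleton.elim _ _⟩
    have key : ∀ n : ℕ, ∀ k : ℤ, b ≤ k + n →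
        ∃ σ : Λ' ⊗[Λ] M (k + 1) →ₗ[Λ'] Λ' ⊗[Λ] M k,
          ∀ x, ((d (k + 1)).baseChange Λ') x = 0 → ((d k).baseChange Λ') (σ x) = x := by
      intro n
      induction n with
      | zero => intro k hk; exact hbase k (by omega)
      | succ n ih =>
        intro k hk
        exact hstep k (ih (k + 1) (by push_cast at hk ⊢; omega))
    intro k
    exact key (b - k).toNat k (by omega)
  -- the two-term homotopy identity over Λ'
  have hiden : ∀ (k : ℤ)
      (σ : Λ' ⊗[Λ] M (k + 1) →ₗ[Λ'] Λ' ⊗[Λ] M k)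
      (σ' : Λ' ⊗[Λ] M (k + 1 + 1) →ₗ[Λ'] Λ' ⊗[Λ] M (k + 1)),
      (∀ x, ((d (k + 1)).baseChange Λ') x = 0 → ((d k).baseChange Λ') (σ x) = x) →
      (∀ x, ((d (k + 1 + 1)).baseChange Λ') x = 0 → ((d (k + 1)).baseChange Λ') (σ' x) = x) →
      ∀ x : Λ' ⊗[Λ] M (k + 1),
        ((d k).baseChange Λ') (σ x) +
          (σ' (((d (k + 1)).baseChange Λ') x) -
            ((d k).baseChange Λ') (σ (σ' (((d (k + 1)).baseChange Λ') x)))) = x := by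
    intro k σ σ' hσ hσ' x
    set Dk := (d k).baseChange Λ' with hDk
    set Dk1 := (d (k + 1)).baseChange Λ' with hDk1
    set u := σ' (Dk1 x) with hu
    set z := u - x + Dk (σ x) - Dk (σ u) with hz
    have hpp : ∀ y : Λ' ⊗[Λ] M (k + 1), Dk (σ (Dk (σ y))) = Dk (σ y) :=
      fun y => hσ (Dk (σ y)) (hDD k (σ y))
    have hz0 : z = 0 := by
      have hzker : Dk1 z = 0 := by
        have h1 : Dk1 u = Dk1 x := hσ' (Dk1 x) (hDD (k + 1) x)
        simp only [hz, map_sub, map_add, h1, show ∀ y, Dk1 (Dk y) = 0 from hDD k]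
        abel
      have h2 : Dk (σ z) = z := hσ z hzker
      have h3 : Dk (σ z) = 0 := by
        simp only [hz, map_sub, map_add, hpp]
        abel
      rw [h3] at h2
      exact h2.symm
    have : Dk (σ x) + (u - Dk (σ u)) = x + z := by rw [hz]; abel
    rw [hz0, add_zero] at this
    exact this
  -- now the main argument, one degree at a time
  intro i
  obtain ⟨σ1, hσ1⟩ := hR i
  obtain ⟨σ2, hσ2⟩ := hR (i + 1)
  obtain ⟨σ3, hσ3⟩ := hR (i + 1 + 1)
  set h2 : Λ' ⊗[Λ] M (i + 1 + 1) →ₗ[Λ'] Λ' ⊗[Λ] M (i + 1) :=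
    σ2 - (((d i).baseChange Λ') ∘ₗ σ1) ∘ₗ σ2 with hh2
  set h3 : Λ' ⊗[Λ] M (i + 1 + 1 + 1) →ₗ[Λ'] Λ' ⊗[Λ] M (i + 1 + 1) :=
    σ3 - (((d (i + 1)).baseChange Λ') ∘ₗ σ2) ∘ₗ σ3 with hh3
  have idA : ∀ x : Λ' ⊗[Λ] M (i + 1),
      ((d i).baseChange Λ') (σ1 x) + h2 (((d (i + 1)).baseChange Λ') x) = x := by
    intro x
    have := hiden i σ1 σ2 hσ1 hσ2 x
    simpa [hh2, LinearMap.sub_apply, LinearMap.comp_apply] using this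
  have idB : ∀ y : Λ' ⊗[Λ] M (i + 1 + 1),
      ((d (i + 1)).baseChange Λ') (h2 y) + h3 (((d (i + 1 + 1)).baseChange Λ') y) = y := by
    intro y
    have hB := hiden (i + 1) σ2 σ3 hσ2 hσ3 y
    have hcorr : ((d (i + 1)).baseChange Λ') (h2 y) = ((d (i + 1)).baseChange Λ') (σ2 y) := by
      simp only [hh2, LinearMap.sub_apply, LinearMap.comp_apply, map_sub, hDD i, sub_zero]
    rw [hcorr]
    simpa [hh3, LinearMap.sub_apply, LinearMap.comp_apply] using hB
  -- lift the homotopies to Λ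
  obtain ⟨s1, hs1⟩ := Module.projective_lifting_property (TensorProduct.mk Λ Λ' (M i) 1)
    ((σ1.restrictScalars Λ) ∘ₗ (TensorProduct.mk Λ Λ' (M (i + 1)) 1))
    (stmt17_mk_surjective hsurj (M i))
  obtain ⟨s2, hs2⟩ := Module.projective_lifting_property (TensorProduct.mk Λ Λ' (M (i + 1)) 1)
    ((h2.restrictScalars Λ) ∘ₗ (TensorProduct.mk Λ Λ' (M (i + 1 + 1)) 1))
    (stmt17_mk_surjective hsurj (M (i + 1)))
  obtain ⟨s3, hs3⟩ := Module.projective_lifting_property (TensorProduct.mk Λ Λ' (M (i + 1 + 1)) 1)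
    ((h3.restrictScalars Λ) ∘ₗ (TensorProduct.mk Λ Λ' (M (i + 1 + 1 + 1)) 1))
    (stmt17_mk_surjective hsurj (M (i + 1 + 1)))
  have hs1' : ∀ x : M (i + 1), (1 : Λ') ⊗ₜ[Λ] (s1 x) = σ1 ((1 : Λ') ⊗ₜ[Λ] x) := by
    intro x
    have := LinearMap.congr_fun hs1 x
    simpa using this
  have hs2' : ∀ x : M (i + 1 + 1), (1 : Λ') ⊗ₜ[Λ] (s2 x) = h2 ((1 : Λ') ⊗ₜ[Λ] x) := by
    intro x
    have := LinearMap.congr_fun hs2 x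
    simpa using this
  have hs3' : ∀ x : M (i + 1 + 1 + 1), (1 : Λ') ⊗ₜ[Λ] (s3 x) = h3 ((1 : Λ') ⊗ₜ[Λ] x) := by
    intro x
    have := LinearMap.congr_fun hs3 x
    simpa using this
  set E1 : M (i + 1) →ₗ[Λ] M (i + 1) := (d i) ∘ₗ s1 + s2 ∘ₗ (d (i + 1)) with hE1def
  set E2 : M (i + 1 + 1) →ₗ[Λ] M (i + 1 + 1) := (d (i + 1)) ∘ₗ s2 + s3 ∘ₗ (d (i + 1 + 1)) with hE2def
  have hE1c : ∀ x : M (i + 1), (1 : Λ') ⊗ₜ[Λ] (E1 x) = (1 : Λ') ⊗ₜ[Λ] x := by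
    intro x
    have e1 : (1 : Λ') ⊗ₜ[Λ] (E1 x) =
        (1 : Λ') ⊗ₜ[Λ] (d i (s1 x)) + (1 : Λ') ⊗ₜ[Λ] (s2 (d (i + 1) x)) := by
      simp only [hE1def, LinearMap.add_apply, LinearMap.comp_apply, tmul_add]
    rw [e1]
    have e2 : (1 : Λ') ⊗ₜ[Λ] (d i (s1 x)) =
        ((d i).baseChange Λ') (σ1 ((1 : Λ') ⊗ₜ[Λ] x)) := by
      rw [← hs1' x, LinearMap.baseChange_tmul]
    have e3 : (1 : Λ') ⊗ₜ[Λ] (s2 (d (i + 1) x)) =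
        h2 (((d (i + 1)).baseChange Λ') ((1 : Λ') ⊗ₜ[Λ] x)) := by
      rw [hs2' (d (i + 1) x), LinearMap.baseChange_tmul]
    rw [e2, e3, idA]
  have hE2c : ∀ y : M (i + 1 + 1), (1 : Λ') ⊗ₜ[Λ] (E2 y) = (1 : Λ') ⊗ₜ[Λ] y := by
    intro y
    have e1 : (1 : Λ') ⊗ₜ[Λ] (E2 y) =
        (1 : Λ') ⊗ₜ[Λ] (d (i + 1) (s2 y)) + (1 : Λ') ⊗ₜ[Λ] (s3 (d (i + 1 + 1) y)) := by
      simp only [hE2def, LinearMap.add_apply, LinearMap.comp_apply, tmul_add]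
    rw [e1]
    have e2 : (1 : Λ') ⊗ₜ[Λ] (d (i + 1) (s2 y)) =
        ((d (i + 1)).baseChange Λ') (h2 ((1 : Λ') ⊗ₜ[Λ] y)) := by
      rw [← hs2' y, LinearMap.baseChange_tmul]
    have e3 : (1 : Λ') ⊗ₜ[Λ] (s3 (d (i + 1 + 1) y)) =
        h3 (((d (i + 1 + 1)).baseChange Λ') ((1 : Λ') ⊗ₜ[Λ] y)) := by
      rw [hs3' (d (i + 1 + 1) y), LinearMap.baseChange_tmul]
    rw [e2, e3, idB]
  have hE1 : Function.Bijective E1 := by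
    refine stmt17_bij hjac (M (i + 1)) E1 (fun x => stmt17_ker hsurj (M (i + 1)) _ ?_)
    rw [tmul_sub, hE1c x, sub_self]
  have hE2 : Function.Bijective E2 := by
    refine stmt17_bij hjac (M (i + 1 + 1)) E2 (fun y => stmt17_ker hsurj (M (i + 1 + 1)) _ ?_)
    rw [tmul_sub, hE2c y, sub_self]
  -- conclude exactness
  intro y
  constructor
  · intro hy
    obtain ⟨w, hw⟩ := hE1.2 y
    have hw1 : y = d i (s1 w) + s2 (d (i + 1) w) := by
      rw [← hw]; simp [hE1def]
    have h4 : d (i + 1) (s2 (d (i + 1) w)) = 0 := by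
      have : d (i + 1) y = d (i + 1) (d i (s1 w)) + d (i + 1) (s2 (d (i + 1) w)) := by
        rw [hw1, map_add]
      rw [hy, hdd i (s1 w), zero_add] at this
      exact this.symm
    have h5 : E2 (d (i + 1) w) = 0 := by
      simp only [hE2def, LinearMap.add_apply, LinearMap.comp_apply, h4,
        hdd (i + 1) w, map_zero, add_zero]
    have h6 : d (i + 1) w = 0 := by
      apply hE2.1
      rw [h5, map_zero]
    refine ⟨s1 w, ?_⟩
    rw [hw1, h6, map_zero, add_zero]
  · rintro ⟨z, rfl⟩
    exact hdd i z
end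

section
/- Let K be a number field with ring of integers O_K. Then the profinite completion Ô_K = ∏_𝔭 O_{K_𝔭} (the product over all finite places 𝔭 of K of the valuation rings of the completions K_𝔭) and the finite adele ring 𝔸_{K,f} of K are semi-hereditary commutative rings. -/
set_option maxHeartbeats 1000000


open IsDedekindDomain NumberField

/-- A commutative ring is semi-hereditary if every finitely generated ideal is projective as a
module over it. -/
def IsSemihereditaryRing (R : Type*) [CommRing R] : Prop :=
  ∀ I : Ideal R, I.FG → Module.Projective R I

lemma projective_span_singleton_s18 {R : Type*} [CommRing R] (g e : R)
    (hi : IsIdempotentElem e)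
    (he : ∀ x : R, x * g = 0 ↔ e * x = x) :
    Module.Projective R (Ideal.span {g} : Ideal R) := by
  set f := LinearMap.toSpanSingleton R R g with hf
  have heg : e * g = 0 := (he e).mpr hi
  have hker : ∀ x : R, x ∈ LinearMap.ker f → (1 - e) • x = 0 := by
    intro x hx
    rw [LinearMap.mem_ker, hf, LinearMap.toSpanSingleton_apply, smul_eq_mul] at hx
    have h := (he x).mp hx
    rw [smul_eq_mul, sub_mul, one_mul, h, sub_self]
  haveI : Module.Projective R (R ⧸ LinearMap.ker f) := by
    refine Module.Projective.of_split
      (Submodule.liftQ _ (LinearMap.lsmul R R (1 - e)) (show LinearMap.ker f ≤ _ from fun x hx => LinearMap.mem_ker.mpr (hker x hx)))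
      (LinearMap.ker f).mkQ ?_
    refine LinearMap.ext fun q => ?_
    obtain ⟨r, rfl⟩ := Submodule.Quotient.mk_surjective _ q
    simp only [LinearMap.comp_apply, Submodule.mkQ_apply, LinearMap.id_apply]
    rw [Submodule.liftQ_apply]  -- may need mkQ form
    simp only [LinearMap.lsmul_apply]
    rw [Submodule.Quotient.eq]
    have : (1 - e) • r - r = -(e * r) := by rw [smul_eq_mul]; ring
    rw [this]
    rw [LinearMap.mem_ker, hf, map_neg, LinearMap.toSpanSingleton_apply, smul_eq_mul,
      mul_comm e r, mul_assoc, heg, mul_zero, neg_zero]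
  have hr : (Ideal.span {g} : Submodule R R) = LinearMap.range f := by
    rw [← Ideal.submodule_span_eq]
    exact LinearMap.span_singleton_eq_range R R g
  rw [hr]
  exact Module.Projective.of_equiv f.quotKerEquivRange

lemma semihereditary_of_pair_and_ann {R : Type*} [CommRing R]
    (h1 : ∀ x y : R, ∃ g : R, Ideal.span {x, y} = Ideal.span {g})
    (h2 : ∀ g : R, ∃ e : R, IsIdempotentElem e ∧ ∀ x : R, x * g = 0 ↔ e * x = x) :
    IsSemihereditaryRing R := by
  haveI : IsBezout R := IsBezout.iff_span_pair_isPrincipal.mpr fun x y => by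
    obtain ⟨g, hg⟩ := h1 x y
    exact ⟨⟨g, by rw [hg, Ideal.submodule_span_eq]⟩⟩
  intro I hI
  obtain ⟨g, hg⟩ := IsBezout.isPrincipal_of_FG I hI
  obtain ⟨e, hi, he⟩ := h2 g
  rw [show I = Ideal.span {g} by rw [hg, Ideal.submodule_span_eq]]
  exact projective_span_singleton_s18 g e hi he

def ProdAdicCompletions.IsFiniteAdele {K : Type} [Field K] [NumberField K]
    (x : Π v : HeightOneSpectrum (𝓞 K), v.adicCompletion K) : Prop :=
  ∀ᶠ v in Filter.cofinite, x v ∈ v.adicCompletionIntegers K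

theorem partA_pair (K : Type) [Field K] [NumberField K]
    (a b : Π v : HeightOneSpectrum (𝓞 K), v.adicCompletionIntegers K) :
    ∃ g, Ideal.span {a, b} = Ideal.span {g} := by
  classical
  have hv : ∀ v, a v ∣ b v ∨ b v ∣ a v := fun v => by
    obtain ⟨c, hc | hc⟩ := ValuationRing.cond (a v) (b v)
    · exact Or.inl ⟨c, hc.symm⟩
    · exact Or.inr ⟨c, hc.symm⟩
  set g : Π v : HeightOneSpectrum (𝓞 K), v.adicCompletionIntegers K :=
    fun v => if a v ∣ b v then a v else b v with hgdef
  have hga : ∀ v, g v ∣ a v := by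
    intro v
    by_cases h : a v ∣ b v
    · rw [hgdef]; simpa [h] using dvd_refl (a v)
    · rw [hgdef]; simpa [h] using (hv v).resolve_left h
  have hgb : ∀ v, g v ∣ b v := by
    intro v
    by_cases h : a v ∣ b v
    · rw [hgdef]; simpa [h] using h
    · rw [hgdef]; simpa [h] using dvd_refl (b v)
  refine ⟨g, le_antisymm ?_ ?_⟩
  · rw [Ideal.span_le]
    intro x hx
    simp only [Set.mem_insert_iff, Set.mem_singleton_iff] at hx
    rw [SetLike.mem_coe, Ideal.mem_span_singleton]
    rcases hx with rfl | rfl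
    · exact ⟨fun v => (hga v).choose, funext fun v => (hga v).choose_spec⟩
    · exact ⟨fun v => (hgb v).choose, funext fun v => (hgb v).choose_spec⟩
  · rw [Ideal.span_le]
    intro x hx
    rw [Set.mem_singleton_iff] at hx
    subst hx
    rw [SetLike.mem_coe, Ideal.mem_span_pair]
    refine ⟨fun v => if a v ∣ b v then 1 else 0, fun v => if a v ∣ b v then 0 else 1, ?_⟩
    funext v
    simp only [Pi.add_apply, Pi.mul_apply]
    by_cases h : a v ∣ b v <;> simp [hgdef, h]

theorem partA_ann (K : Type) [Field K] [NumberField K]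
    (a : Π v : HeightOneSpectrum (𝓞 K), v.adicCompletionIntegers K) :
    ∃ e, IsIdempotentElem e ∧ ∀ x, x * a = 0 ↔ e * x = x := by
  classical
  refine ⟨fun v => if a v = 0 then 1 else 0, ?_, ?_⟩
  · show _ = _
    funext v
    show (if a v = 0 then (1 : v.adicCompletionIntegers K) else 0)
      * (if a v = 0 then 1 else 0) = _
    by_cases h : a v = 0 <;> simp [h]
  · intro x
    constructor
    · intro h
      funext v
      have hv := congrFun h v
      simp only [Pi.mul_apply, Pi.zero_apply] at hv
      show (if a v = 0 then (1 : v.adicCompletionIntegers K) else 0) * x v = x v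
      by_cases ha : a v = 0
      · simp [ha]
      · have : x v = 0 := (mul_eq_zero.mp hv).resolve_right ha
        simp [ha, this]
    · intro h
      funext v
      have hv := congrFun h v
      simp only [Pi.mul_apply] at hv
      show x v * a v = 0
      by_cases ha : a v = 0
      · simp [ha]
      · rw [if_neg ha, zero_mul] at hv
        rw [← hv, zero_mul]

theorem partB_pair (K : Type) [Field K] [NumberField K]
    (a b : FiniteAdeleRing (𝓞 K) K) :
    ∃ g, Ideal.span {a, b} = Ideal.span {g} := by
  classical
  have hint : (ProdAdicCompletions.IsFiniteAdele
      (fun v => if Valued.v (a.1 v) ≤ Valued.v (b.1 v) then b.1 v else a.1 v)) := by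
    filter_upwards [a.2, b.2] with v ha hb
    by_cases h : Valued.v (a.1 v) ≤ Valued.v (b.1 v) <;> simp only [h, if_pos, if_neg,
      if_true, if_false] <;> assumption
  set g : FiniteAdeleRing (𝓞 K) K :=
    ⟨fun v => if Valued.v (a.1 v) ≤ Valued.v (b.1 v) then b.1 v else a.1 v, hint⟩ with hgdef
  have hgv : ∀ v, Valued.v (a.1 v) ≤ Valued.v (g.1 v) ∧ Valued.v (b.1 v) ≤ Valued.v (g.1 v) := by
    intro v
    by_cases h : Valued.v (a.1 v) ≤ Valued.v (b.1 v)
    · rw [hgdef]; simp only [if_pos h]; exact ⟨h, le_refl _⟩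
    · rw [hgdef]; simp only [if_neg h]; exact ⟨le_refl _, le_of_not_ge h⟩
  have hdvd : ∀ x : FiniteAdeleRing (𝓞 K) K,
      (∀ v, Valued.v (x.1 v) ≤ Valued.v (g.1 v)) → x ∈ Ideal.span {g} := by
    intro x hx
    rw [Ideal.mem_span_singleton]
    have hcint : (ProdAdicCompletions.IsFiniteAdele
        (fun v => if g.1 v = 0 then 0 else x.1 v * (g.1 v)⁻¹)) := by
      apply Filter.Eventually.of_forall
      intro v
      by_cases h : g.1 v = 0
      · simp only [if_pos h]
        exact zero_mem _
      · dsimp only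
        rw [if_neg h, IsDedekindDomain.HeightOneSpectrum.mem_adicCompletionIntegers,
          map_mul, map_inv₀, ← div_eq_mul_inv,
          div_le_one₀ (by rwa [zero_lt_iff, Valuation.ne_zero_iff])]
        exact hx v
    refine ⟨⟨fun v => if g.1 v = 0 then 0 else x.1 v * (g.1 v)⁻¹, hcint⟩, ?_⟩
    apply Subtype.ext
    funext v
    show x.1 v = g.1 v * (if g.1 v = 0 then 0 else x.1 v * (g.1 v)⁻¹)
    by_cases h : g.1 v = 0
    · rw [if_pos h, mul_zero]
      have h0 : Valued.v (x.1 v) = 0 := by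
        apply le_antisymm _ zero_le'
        rw [← show Valued.v (g.1 v) = 0 by rw [h, map_zero]]
        exact hx v
      rwa [Valuation.zero_iff] at h0
    · rw [if_neg h, mul_comm (x.1 v), ← mul_assoc, mul_inv_cancel₀ h, one_mul]
  have h01int : ∀ (f : HeightOneSpectrum (𝓞 K) → Prop) (hd : DecidablePred f),
      (ProdAdicCompletions.IsFiniteAdele
        (fun v => @ite _ (f v) (hd v) (0 : v.adicCompletion K) 1)) := by
    intro f hd
    apply Filter.Eventually.of_forall
    intro v
    by_cases h : f v
    · simp only [if_pos h]; exact zero_mem _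
    · simp only [if_neg h]; exact one_mem _
  refine ⟨g, le_antisymm ?_ ?_⟩
  · rw [Ideal.span_le]
    intro x hx
    simp only [Set.mem_insert_iff, Set.mem_singleton_iff] at hx
    rcases hx with rfl | rfl
    · exact hdvd x fun v => (hgv v).1
    · exact hdvd x fun v => (hgv v).2
  · rw [Ideal.span_le]
    intro x hx
    rw [Set.mem_singleton_iff] at hx
    subst hx
    rw [SetLike.mem_coe, Ideal.mem_span_pair]
    refine ⟨⟨fun v => if Valued.v (a.1 v) ≤ Valued.v (b.1 v) then 0 else 1,
        h01int (fun v => Valued.v (a.1 v) ≤ Valued.v (b.1 v)) (fun v => inferInstance)⟩,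
      ⟨fun v => if ¬ (Valued.v (a.1 v) ≤ Valued.v (b.1 v)) then 0 else 1,
        h01int (fun v => ¬ (Valued.v (a.1 v) ≤ Valued.v (b.1 v))) (fun v => inferInstance)⟩, ?_⟩
    apply Subtype.ext
    funext v
    show (if Valued.v (a.1 v) ≤ Valued.v (b.1 v) then (0 : v.adicCompletion K) else 1) * a.1 v
        + (if ¬ (Valued.v (a.1 v) ≤ Valued.v (b.1 v)) then (0 : v.adicCompletion K) else 1) * b.1 v
        = g.1 v
    by_cases h : Valued.v (a.1 v) ≤ Valued.v (b.1 v)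
    · rw [hgdef]; simp [h]
    · rw [hgdef]; simp [h]

theorem partB_ann (K : Type) [Field K] [NumberField K]
    (a : FiniteAdeleRing (𝓞 K) K) :
    ∃ e, IsIdempotentElem e ∧ ∀ x, x * a = 0 ↔ e * x = x := by
  classical
  have h01int : (ProdAdicCompletions.IsFiniteAdele
      (fun v => if a.1 v = 0 then (1 : v.adicCompletion K) else 0)) := by
    apply Filter.Eventually.of_forall
    intro v
    by_cases h : a.1 v = 0
    · simp only [if_pos h]; exact one_mem _
    · simp only [if_neg h]; exact zero_mem _
  refine ⟨⟨fun v => if a.1 v = 0 then 1 else 0, h01int⟩, ?_, ?_⟩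
  · apply Subtype.ext
    funext v
    show (if a.1 v = 0 then (1 : v.adicCompletion K) else 0)
      * (if a.1 v = 0 then 1 else 0) = (if a.1 v = 0 then 1 else 0)
    by_cases h : a.1 v = 0 <;> simp [h]
  · intro x
    constructor
    · intro h
      apply Subtype.ext
      funext v
      have hv : x.1 v * a.1 v = 0 := congrFun (congrArg Subtype.val h) v
      show (if a.1 v = 0 then (1 : v.adicCompletion K) else 0) * x.1 v = x.1 v
      by_cases ha : a.1 v = 0
      · simp [ha]
      · have : x.1 v = 0 := (mul_eq_zero.mp hv).resolve_right ha
        simp [ha, this]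
    · intro h
      apply Subtype.ext
      funext v
      have hv : (if a.1 v = 0 then (1 : v.adicCompletion K) else 0) * x.1 v = x.1 v :=
        congrFun (congrArg Subtype.val h) v
      show x.1 v * a.1 v = 0
      by_cases ha : a.1 v = 0
      · rw [ha, mul_zero]
      · rw [if_neg ha, zero_mul] at hv
        rw [← hv, zero_mul]

/-- Let `K` be a number field with ring of integers `O_K`.  Then the profinite
completion `Ô_K = ∏_𝔭 O_{K_𝔭}` (product over the finite places of `K` of the valuation rings of
the completions) and the finite adele ring `𝔸_{K,f}` are semi-hereditary commutative rings. -/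
theorem stmt_18 (K : Type) [Field K] [NumberField K] :
    IsSemihereditaryRing (Π v : HeightOneSpectrum (𝓞 K), v.adicCompletionIntegers K) ∧
    IsSemihereditaryRing (FiniteAdeleRing (𝓞 K) K) :=
  ⟨semihereditary_of_pair_and_ann (partA_pair K) (partA_ann K),
   semihereditary_of_pair_and_ann (partB_pair K) (partB_ann K)⟩
end

section
/- Let p be a prime, let βℕ be the Stone–Čech compactification of the discrete space ℕ, and let F ∈ C(βℕ, ℚ_p) be the unique continuous extension of the map ℕ → ℚ_p, n ↦ pⁿ. Then F(x) = 0 for every point x ∈ βℕ ∖ ℕ, and yet multiplication by F on the ring C(βℕ, ℚ_p) is injective, i.e. F is a non-zero-divisor: if g ∈ C(βℕ, ℚ_p) satisfies F·g = 0, then g = 0. -/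
/-- If `‖a - b‖ < ‖b‖` in `ℚ_[p]`, then `‖a‖ = ‖b‖`. -/
lemma norm_eq_of_sub_lt {p : ℕ} [Fact p.Prime] {a b : ℚ_[p]} (h : ‖a - b‖ < ‖b‖) :
    ‖a‖ = ‖b‖ := by
  have hne : ‖a - b‖ ≠ ‖b‖ := ne_of_lt h
  have : a = (a - b) + b := by ring
  rw [this, Padic.add_eq_max_of_ne hne, max_eq_right h.le]

lemma pow_norm_inj {p : ℕ} [Fact p.Prime] : Function.Injective
    (fun k : ℕ => ‖(p : ℚ_[p]) ^ k‖) := by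
  have hp : (1 : ℝ) < p := by exact_mod_cast (Fact.out : p.Prime).one_lt
  intro k m h
  simp only [norm_pow, Padic.norm_p] at h
  have h0 : (0 : ℝ) < (p : ℝ)⁻¹ := by positivity
  have h1 : (p : ℝ)⁻¹ < 1 := inv_lt_one_of_one_lt₀ hp
  exact (pow_right_strictAnti₀ h0 h1).injective h

/-- Let `p` be a prime and let `F ∈ C(βℕ, ℚ_[p])` be the (unique) continuous
extension of the map `ℕ → ℚ_[p]`, `n ↦ pⁿ`, to the Stone–Čech compactification `βℕ` of the
discrete space `ℕ`.  Then `F` vanishes at every point of `βℕ ∖ ℕ`, and yet `F` is a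
non-zero-divisor in the ring `C(βℕ, ℚ_[p])`: if `F · g = 0` then `g = 0`. -/
theorem stmt_19 (p : ℕ) [Fact p.Prime] (F : C(StoneCech ℕ, ℚ_[p]))
    (hF : ∀ n : ℕ, F (stoneCechUnit n) = (p : ℚ_[p]) ^ n) :
    (∀ x : StoneCech ℕ, (∀ n : ℕ, x ≠ stoneCechUnit n) → F x = 0) ∧
    (∀ g : C(StoneCech ℕ, ℚ_[p]), F * g = 0 → g = 0) := by
  have hdense : Dense (Set.range (stoneCechUnit : ℕ → StoneCech ℕ)) :=
    denseRange_stoneCechUnit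
  constructor
  · intro x hx
    by_contra h0
    have hc : 0 < ‖F x‖ := norm_pos_iff.mpr h0
    set V : Set (StoneCech ℕ) := F ⁻¹' Metric.ball (F x) ‖F x‖ with hV
    have hVopen : IsOpen V := (Metric.isOpen_ball).preimage F.continuous
    have hxV : x ∈ V := by simp [hV, hc]
    -- every natural point in V has norm-determined index
    have hnorm : ∀ k : ℕ, stoneCechUnit k ∈ V → ‖(p : ℚ_[p]) ^ k‖ = ‖F x‖ := by
      intro k hk
      have : ‖F (stoneCechUnit k) - F x‖ < ‖F x‖ := by
        simpa [hV, Metric.mem_ball, dist_eq_norm] using hk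
      rw [hF k] at this
      exact norm_eq_of_sub_lt this
    -- V meets the range of stoneCechUnit
    obtain ⟨y, hk₀V, k₀, rfl⟩ := hdense.inter_open_nonempty V hVopen ⟨x, hxV⟩
    -- V ∩ range ⊆ {stoneCechUnit k₀}
    have hsub : V ∩ Set.range (stoneCechUnit : ℕ → StoneCech ℕ) ⊆ {stoneCechUnit k₀} := by
      rintro y ⟨hyV, k, rfl⟩
      have h1 := hnorm k hyV
      have h2 := hnorm k₀ hk₀V
      have : k = k₀ := pow_norm_inj (h1.trans h2.symm)
      simp [this]
    have hsub2 : V ⊆ {stoneCechUnit k₀} :=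
      (hdense.open_subset_closure_inter hVopen).trans
        ((closure_mono hsub).trans (by simp))
    exact hx k₀ (hsub2 hxV)
  · intro g hg
    have hzero : ∀ n : ℕ, g (stoneCechUnit n) = 0 := by
      intro n
      have := congrFun (congrArg (DFunLike.coe) hg) (stoneCechUnit n)
      simp only [ContinuousMap.mul_apply, ContinuousMap.zero_apply, hF n] at this
      have hp0 : ((p : ℚ_[p]) ^ n) ≠ 0 := by
        exact pow_ne_zero _ (Nat.cast_ne_zero.mpr (Fact.out : p.Prime).ne_zero)
      exact (mul_eq_zero.mp this).resolve_left hp0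
    ext x
    have : ⇑g = fun _ => (0 : ℚ_[p]) := by
      apply Continuous.ext_on hdense g.continuous continuous_const
      rintro y ⟨n, rfl⟩
      exact hzero n
    simp [congrFun this x]
end
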